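/- arXiv:2602.11867 — 5 statements merged into one kernel-verified Lean document; each statement's English description precedes it below -/
import Mathlib

section
/- Let n, a, b, c, p, q, r be positive integers with n = p·a = q·b = r·c and p + q + r = n (genus 1). Then the following are equivalent: (1) a < n, b < n and c < n (the passport [a^p, b^q, c^r] contains no part of type n^1); (2) there exist permutations x, y of Fin n such that every orbit of x has size a, every orbit of y has size b, every orbit of (x*y)⁻¹ has size c, the subgroup G of Equiv.Perm (Fin n) generated by x and y acts transitively on Fin n, and Fintype.card G ≠ n. That is, a uniform passport of genus 1 admits a non-regular dessin if and only if it does not contain an element of type n^1. -/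
/-- The orbit of `e` under the permutation `σ`: `{σ^k e : k ∈ ℤ}`. -/
def permOrbit {E : Type*} (σ : Equiv.Perm E) (e : E) : Set E :=
  {f | ∃ k : ℤ, (σ ^ k) e = f}

/-- Every orbit of `σ` has exactly `a` elements. -/
def allOrbitsSize {E : Type*} (σ : Equiv.Perm E) (a : ℕ) : Prop :=
  ∀ e : E, (permOrbit σ e).ncard = a

section Aux
open Equiv Function

lemma permOrbit_eq_orbit {E : Type*} (σ : Equiv.Perm E) (e : E) :
    permOrbit σ e = MulAction.orbit (Subgroup.zpowers σ) e := by
  ext f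
  constructor
  · rintro ⟨k, rfl⟩
    exact ⟨⟨σ ^ k, Subgroup.zpow_mem _ (Subgroup.mem_zpowers σ) k⟩, rfl⟩
  · rintro ⟨⟨g, hg⟩, rfl⟩
    obtain ⟨k, rfl⟩ := Subgroup.mem_zpowers_iff.mp hg
    exact ⟨k, rfl⟩

lemma permOrbit_ncard {E : Type*} (σ : Equiv.Perm E) (e : E) :
    (permOrbit σ e).ncard = Function.minimalPeriod σ e := by
  rw [← Nat.card_coe_set_eq, permOrbit_eq_orbit]
  rw [Nat.card_congr (MulAction.orbitZPowersEquiv σ e)]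
  rw [Nat.card_zmod]
  rfl

lemma allOrbitsSize_iff {E : Type*} (σ : Equiv.Perm E) (a : ℕ) :
    allOrbitsSize σ a ↔ ∀ e, Function.minimalPeriod σ e = a := by
  unfold allOrbitsSize
  simp [permOrbit_ncard]

lemma perm_isPeriodicPt_iff {E : Type*} (σ : Equiv.Perm E) (n : ℕ) (e : E) :
    Function.IsPeriodicPt σ n e ↔ (σ ^ n) e = e := by
  unfold Function.IsPeriodicPt Function.IsFixedPt
  rw [Equiv.Perm.iterate_eq_pow]

lemma minimalPeriod_eq_of {E : Type*} (σ : Equiv.Perm E) (d : ℕ) (e : E) (hd : 0 < d)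
    (h1 : (σ ^ d) e = e) (h2 : ∀ k, 0 < k → k < d → (σ ^ k) e ≠ e) :
    Function.minimalPeriod σ e = d := by
  have hp : Function.IsPeriodicPt σ d e := (perm_isPeriodicPt_iff σ d e).mpr h1
  have hle : Function.minimalPeriod σ e ≤ d := hp.minimalPeriod_le hd
  have hpos : 0 < Function.minimalPeriod σ e :=
    Function.minimalPeriod_pos_of_mem_periodicPts ⟨d, hd, hp⟩
  rcases lt_or_eq_of_le hle with h | h
  · exact absurd ((perm_isPeriodicPt_iff σ _ e).mp (Function.isPeriodicPt_minimalPeriod σ e))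
      (h2 _ hpos h)
  · exact h

lemma pow_apply_eq_of_allOrbitsSize {E : Type*} [Finite E] {σ : Equiv.Perm E} {d : ℕ}
    (h : allOrbitsSize σ d) (e : E) : (σ ^ d) e = e := by
  rw [allOrbitsSize_iff] at h
  have := Function.isPeriodicPt_minimalPeriod σ e
  rw [h e] at this
  exact (perm_isPeriodicPt_iff σ d e).mp this

lemma pow_apply_ne_of_allOrbitsSize {E : Type*} {σ : Equiv.Perm E} {d : ℕ}
    (h : allOrbitsSize σ d) (e : E) (k : ℕ) (hk : 0 < k) (hkd : k < d) : (σ ^ k) e ≠ e := by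
  rw [allOrbitsSize_iff] at h
  intro hke
  have := ((perm_isPeriodicPt_iff σ k e).mpr hke).minimalPeriod_le hk
  rw [h e] at this
  omega

lemma allOrbitsSize_inv_iff {E : Type*} (σ : Equiv.Perm E) (d : ℕ) :
    allOrbitsSize σ⁻¹ d ↔ allOrbitsSize σ d := by
  have horb : ∀ e, permOrbit σ⁻¹ e = permOrbit σ e := by
    intro e
    ext f
    constructor
    · rintro ⟨k, rfl⟩; exact ⟨-k, by rw [zpow_neg, ← inv_zpow]⟩
    · rintro ⟨k, rfl⟩; exact ⟨-k, by rw [inv_zpow, zpow_neg, inv_inv]⟩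
  unfold allOrbitsSize
  simp [horb]

lemma permOrbit_conj {E : Type*} (π σ : Equiv.Perm E) (e : E) :
    permOrbit (π * σ * π⁻¹) (π e) = π '' permOrbit σ e := by
  have hc : ∀ k : ℤ, (π * σ * π⁻¹) ^ k = π * σ ^ k * π⁻¹ := by
    intro k
    have := map_zpow (MulAut.conj π) σ k
    simp only [MulAut.conj_apply] at this
    exact this.symm
  ext f
  constructor
  · rintro ⟨k, rfl⟩
    exact ⟨(σ ^ k) e, ⟨k, rfl⟩, by rw [hc]; simp⟩
  · rintro ⟨g, ⟨k, rfl⟩, rfl⟩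
    exact ⟨k, by rw [hc]; simp⟩

lemma allOrbitsSize_conj_iff {E : Type*} (π σ : Equiv.Perm E) (d : ℕ) :
    allOrbitsSize (π * σ * π⁻¹) d ↔ allOrbitsSize σ d := by
  constructor
  · intro h e
    have := h (π e)
    rwa [permOrbit_conj, Set.ncard_image_of_injective _ π.injective] at this
  · intro h e
    have he : e = π (π⁻¹ e) := by simp
    rw [he, permOrbit_conj, Set.ncard_image_of_injective _ π.injective]
    exact h _

def DessinP (n a b c : ℕ) : Prop :=
  ∃ x y : Equiv.Perm (Fin n),
    allOrbitsSize x a ∧ allOrbitsSize y b ∧ allOrbitsSize (x * y)⁻¹ c ∧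
    (∀ e f : Fin n,
      ∃ g ∈ Subgroup.closure ({x, y} : Set (Equiv.Perm (Fin n))), g e = f) ∧
    Nat.card (Subgroup.closure ({x, y} : Set (Equiv.Perm (Fin n)))) ≠ n

lemma pair_subset_iff {G : Type*} [Group G] (u v : G) (H : Subgroup G) :
    Subgroup.closure ({u, v} : Set G) ≤ H ↔ u ∈ H ∧ v ∈ H := by
  rw [Subgroup.closure_le]
  constructor
  · intro h
    exact ⟨h (Set.mem_insert _ _), h (Set.mem_insert_of_mem _ rfl)⟩
  · rintro ⟨h1, h2⟩ g hg
    rcases Set.mem_insert_iff.mp hg with rfl | hg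
    · exact h1
    · rw [Set.mem_singleton_iff] at hg; subst hg; exact h2

lemma mem_closure_pair_left {G : Type*} [Group G] (u v : G) :
    u ∈ Subgroup.closure ({u, v} : Set G) :=
  Subgroup.subset_closure (Set.mem_insert _ _)

lemma mem_closure_pair_right {G : Type*} [Group G] (u v : G) :
    v ∈ Subgroup.closure ({u, v} : Set G) :=
  Subgroup.subset_closure (Set.mem_insert_of_mem _ rfl)

lemma closure_pair_comm_inv {G : Type*} [Group G] (x y : G) :
    Subgroup.closure ({y⁻¹, x⁻¹} : Set G) = Subgroup.closure ({x, y} : Set G) := by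
  apply le_antisymm
  · rw [pair_subset_iff]
    exact ⟨inv_mem (mem_closure_pair_right x y), inv_mem (mem_closure_pair_left x y)⟩
  · rw [pair_subset_iff]
    constructor
    · have := inv_mem (mem_closure_pair_right y⁻¹ x⁻¹); simpa using this
    · have := inv_mem (mem_closure_pair_left y⁻¹ x⁻¹); simpa using this

lemma closure_pair_cyc {G : Type*} [Group G] (x y : G) :
    Subgroup.closure ({y, (x*y)⁻¹} : Set G) = Subgroup.closure ({x, y} : Set G) := by
  apply le_antisymm
  · rw [pair_subset_iff]
    refine ⟨mem_closure_pair_right x y, inv_mem (mul_mem (mem_closure_pair_left x y)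
      (mem_closure_pair_right x y))⟩
  · rw [pair_subset_iff]
    constructor
    · have hxy : x*y ∈ Subgroup.closure ({y, (x*y)⁻¹} : Set G) := by
        have := inv_mem (mem_closure_pair_right y (x*y)⁻¹); simpa using this
      have := mul_mem hxy (inv_mem (mem_closure_pair_left y (x*y)⁻¹))
      simpa using this
    · exact mem_closure_pair_left y (x*y)⁻¹

lemma DessinP_swap {n a b c : ℕ} (h : DessinP n a b c) : DessinP n b a c := by
  obtain ⟨x, y, hx, hy, hxy, htrans, hcard⟩ := h
  refine ⟨y⁻¹, x⁻¹, (allOrbitsSize_inv_iff _ _).mpr hy, (allOrbitsSize_inv_iff _ _).mpr hx,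
    ?_, ?_, ?_⟩
  · have : (y⁻¹ * x⁻¹)⁻¹ = x * y := by group
    rw [this]
    exact (allOrbitsSize_inv_iff _ _).mp (by simpa using hxy)
  · rw [closure_pair_comm_inv]; exact htrans
  · rw [closure_pair_comm_inv]; exact hcard

lemma DessinP_cyc {n a b c : ℕ} (h : DessinP n a b c) : DessinP n b c a := by
  obtain ⟨x, y, hx, hy, hxy, htrans, hcard⟩ := h
  refine ⟨y, (x*y)⁻¹, hy, hxy, ?_, ?_, ?_⟩
  · have : (y * (x*y)⁻¹)⁻¹ = x := by group
    rw [this]; exact hx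
  · rw [closure_pair_cyc]; exact htrans
  · rw [closure_pair_cyc]; exact hcard

lemma pow_fix_of_fix {E : Type*} (σ : Equiv.Perm E) (d : ℕ) (e : E) (h : (σ^d) e = e) :
    ∀ q : ℕ, ((σ^d)^q) e = e := by
  intro q
  induction q with
  | zero => simp
  | succ k ih => rw [pow_succ, Equiv.Perm.mul_apply, h, ih]

lemma pow_mod_apply {E : Type*} (σ : Equiv.Perm E) (d : ℕ) (e : E) (h : (σ^d) e = e)
    (k : ℕ) : (σ^(k % d)) e = (σ^k) e := by
  conv_rhs => rw [← Nat.mod_add_div k d, pow_add, Equiv.Perm.mul_apply, pow_mul,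
    pow_fix_of_fix σ d e h _]

lemma exists_conj_finRotate {m : ℕ} (x : Equiv.Perm (Fin (m+1)))
    (h : allOrbitsSize x (m+1)) :
    ∃ π : Equiv.Perm (Fin (m+1)), π⁻¹ * x * π = finRotate (m+1) := by
  have hmp := (allOrbitsSize_iff x (m+1)).mp h
  have hfix : (x^(m+1)) 0 = 0 := pow_apply_eq_of_allOrbitsSize h 0
  have hinj : Function.Injective (fun i : Fin (m+1) => (x^(i:ℕ)) 0) := by
    intro i j hij
    simp only at hij
    by_contra hne
    wlog hlt : (i:ℕ) < (j:ℕ) generalizing i j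
    · exact this hij.symm (Ne.symm hne) (by omega)
    · have : (x ^ ((j:ℕ) - (i:ℕ))) ((x^(i:ℕ)) 0) = (x^(i:ℕ)) 0 := by
        rw [← Equiv.Perm.mul_apply, ← pow_add]
        rw [Nat.sub_add_cancel (le_of_lt hlt)]
        exact hij.symm
      exact pow_apply_ne_of_allOrbitsSize h _ _ (by omega) (by omega) this
  have hbij := (Finite.injective_iff_bijective).mp hinj
  set π := Equiv.ofBijective _ hbij with hπ
  refine ⟨π, ?_⟩
  ext i
  have hπi : π i = (x^(i:ℕ)) 0 := rfl
  have key : x (π i) = π (finRotate (m+1) i) := by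
    rw [hπi, finRotate_succ_apply]
    have h2 : π (i+1) = (x^(((i:ℕ)+1) % (m+1))) 0 := by
      have : ((i + 1 : Fin (m+1)) : ℕ) = ((i:ℕ)+1) % (m+1) := by
        simp [Fin.add_def]
      rw [show π (i+1) = (x^((i+1 : Fin (m+1)):ℕ)) 0 from rfl, this]
    rw [h2, pow_mod_apply x (m+1) 0 hfix, pow_succ', Equiv.Perm.mul_apply]
  simp only [Equiv.Perm.mul_apply]
  rw [key]
  simp

lemma conj_pow_eq {G : Type*} [Group G] (π x y : G) (k : ℕ)
    (h : π⁻¹ * y * π = (π⁻¹ * x * π)^k) : y = x^k := by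
  have h2 : ∀ j : ℕ, (π⁻¹ * x * π)^j = π⁻¹ * x^j * π := by
    intro j
    induction j with
    | zero => group
    | succ i ih => rw [pow_succ, ih, pow_succ]; group
  rw [h2 k] at h
  have := congrArg (fun g => π * g * π⁻¹) h
  simpa [mul_assoc] using this

lemma card_closure_of_zpow {n : ℕ} (hn : 0 < n) (x y : Equiv.Perm (Fin n)) (k : ℕ)
    (hy : y = x^k) (hx : allOrbitsSize x n) :
    Nat.card (Subgroup.closure ({x, y} : Set (Equiv.Perm (Fin n)))) = n := by
  have hcl : Subgroup.closure ({x, y} : Set (Equiv.Perm (Fin n))) = Subgroup.zpowers x := by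
    apply le_antisymm
    · rw [pair_subset_iff]
      exact ⟨Subgroup.mem_zpowers x, hy ▸ Subgroup.zpow_mem _ (Subgroup.mem_zpowers x) (k:ℤ)⟩
    · exact Subgroup.zpowers_le.mpr (mem_closure_pair_left x y)
  rw [hcl, Nat.card_zpowers]
  have h1 : x^n = 1 := Equiv.ext fun e => by
    simpa using pow_apply_eq_of_allOrbitsSize hx e
  have hdvd1 : orderOf x ∣ n := orderOf_dvd_of_pow_eq_one h1
  have e0 : Fin n := ⟨0, hn⟩
  have hdvd2 : n ∣ orderOf x := by
    have hper : Function.IsPeriodicPt x (orderOf x) e0 := by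
      rw [perm_isPeriodicPt_iff, pow_orderOf_eq_one]; rfl
    have := hper.minimalPeriod_dvd
    rwa [(allOrbitsSize_iff x n).mp hx e0] at this
  exact Nat.dvd_antisymm hdvd1 hdvd2

set_option maxRecDepth 20000 in
lemma D3 : ∀ z : Equiv.Perm (Fin 3), z^3 = 1 → (∀ e, z e ≠ e) →
    ((finRotate 3 * z)^3 = 1) → (∀ e, (finRotate 3 * z) e ≠ e) → z = finRotate 3 := by
  decide

set_option maxRecDepth 20000 in
lemma D4 : ∀ z : Equiv.Perm (Fin 4), z^2 = 1 → (∀ e, z e ≠ e) →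
    ((finRotate 4 * z)^4 = 1) → (∀ e, (finRotate 4 * z) e ≠ e) →
    (∀ e, ((finRotate 4 * z)^2) e ≠ e) → z = (finRotate 4)^2 := by
  decide

set_option maxRecDepth 20000 in
lemma D6 : ∀ z : Equiv.Perm (Fin 6), z^2 = 1 → (∀ e, z e ≠ e) →
    ((finRotate 6 * z)^3 = 1) → (∀ e, (finRotate 6 * z) e ≠ e) → z = (finRotate 6)^3 := by
  decide

lemma conj_setup {n : ℕ} (x y : Equiv.Perm (Fin n)) (π : Equiv.Perm (Fin n)) (b c : ℕ)
    (hy : allOrbitsSize y b) (hxy : allOrbitsSize (x * y)⁻¹ c) :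
    allOrbitsSize (π⁻¹ * y * π) b ∧
      allOrbitsSize ((π⁻¹ * x * π) * (π⁻¹ * y * π)) c := by
  constructor
  · have := (allOrbitsSize_conj_iff π⁻¹ y b).mpr hy
    rwa [inv_inv] at this
  · have h1 : allOrbitsSize (x * y) c := (allOrbitsSize_inv_iff _ _).mp hxy
    have := (allOrbitsSize_conj_iff π⁻¹ (x*y) c).mpr h1
    rw [inv_inv] at this
    have heq : π⁻¹ * (x * y) * π = (π⁻¹ * x * π) * (π⁻¹ * y * π) := by group
    rwa [heq] at this

lemma N333 : ¬ DessinP 3 3 3 3 := by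
  rintro ⟨x, y, hx, hy, hxy, -, hcard⟩
  obtain ⟨π, hπ⟩ := exists_conj_finRotate (m := 2) x hx
  obtain ⟨hz, hw⟩ := conj_setup x y π 3 3 hy hxy
  rw [hπ] at hw
  set z := π⁻¹ * y * π with hzdef
  have e1 : z^3 = 1 := Equiv.ext fun e => by simpa using pow_apply_eq_of_allOrbitsSize hz e
  have e2 : ∀ e, z e ≠ e := fun e he =>
    pow_apply_ne_of_allOrbitsSize hz e 1 one_pos (by norm_num) (by simpa using he)
  have e3 : (finRotate 3 * z)^3 = 1 := Equiv.ext fun e => by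
    simpa using pow_apply_eq_of_allOrbitsSize hw e
  have e4 : ∀ e, (finRotate 3 * z) e ≠ e := fun e he =>
    pow_apply_ne_of_allOrbitsSize hw e 1 one_pos (by norm_num) (by simpa using he)
  have hzz : z = finRotate 3 := D3 z e1 e2 e3 e4
  have hyx : y = x^1 := by
    apply conj_pow_eq π x y 1
    rw [pow_one, hπ, ← hzz]
  exact hcard (card_closure_of_zpow (by norm_num) x y 1 hyx hx)

lemma N424 : ¬ DessinP 4 4 2 4 := by
  rintro ⟨x, y, hx, hy, hxy, -, hcard⟩
  obtain ⟨π, hπ⟩ := exists_conj_finRotate (m := 3) x hx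
  obtain ⟨hz, hw⟩ := conj_setup x y π 2 4 hy hxy
  rw [hπ] at hw
  set z := π⁻¹ * y * π with hzdef
  have e1 : z^2 = 1 := Equiv.ext fun e => by simpa using pow_apply_eq_of_allOrbitsSize hz e
  have e2 : ∀ e, z e ≠ e := fun e he =>
    pow_apply_ne_of_allOrbitsSize hz e 1 one_pos (by norm_num) (by simpa using he)
  have e3 : (finRotate 4 * z)^4 = 1 := Equiv.ext fun e => by
    simpa using pow_apply_eq_of_allOrbitsSize hw e
  have e4 : ∀ e, (finRotate 4 * z) e ≠ e := fun e he =>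
    pow_apply_ne_of_allOrbitsSize hw e 1 one_pos (by norm_num) (by simpa using he)
  have e5 : ∀ e, ((finRotate 4 * z)^2) e ≠ e := fun e he =>
    pow_apply_ne_of_allOrbitsSize hw e 2 two_pos (by norm_num) (by simpa using he)
  have hzz : z = (finRotate 4)^2 := D4 z e1 e2 e3 e4 e5
  have hyx : y = x^2 := by
    apply conj_pow_eq π x y 2
    rw [hπ, ← hzz]
  exact hcard (card_closure_of_zpow (by norm_num) x y 2 hyx hx)

lemma N623 : ¬ DessinP 6 6 2 3 := by
  rintro ⟨x, y, hx, hy, hxy, -, hcard⟩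
  obtain ⟨π, hπ⟩ := exists_conj_finRotate (m := 5) x hx
  obtain ⟨hz, hw⟩ := conj_setup x y π 2 3 hy hxy
  rw [hπ] at hw
  set z := π⁻¹ * y * π with hzdef
  have e1 : z^2 = 1 := Equiv.ext fun e => by simpa using pow_apply_eq_of_allOrbitsSize hz e
  have e2 : ∀ e, z e ≠ e := fun e he =>
    pow_apply_ne_of_allOrbitsSize hz e 1 one_pos (by norm_num) (by simpa using he)
  have e3 : (finRotate 6 * z)^3 = 1 := Equiv.ext fun e => by
    simpa using pow_apply_eq_of_allOrbitsSize hw e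
  have e4 : ∀ e, (finRotate 6 * z) e ≠ e := fun e he =>
    pow_apply_ne_of_allOrbitsSize hw e 1 one_pos (by norm_num) (by simpa using he)
  have hzz : z = (finRotate 6)^3 := D6 z e1 e2 e3 e4
  have hyx : y = x^3 := by
    apply conj_pow_eq π x y 3
    rw [hπ, ← hzz]
  exact hcard (card_closure_of_zpow (by norm_num) x y 3 hyx hx)

section Aff
variable {K m : ℕ}

def affPerm (δ : ZMod K) (ε c : ZMod K → ZMod m) (hε : ∀ j, ε j * ε j = 1) :
    Equiv.Perm (ZMod K × ZMod m) where
  toFun e := (e.1 + δ, ε e.1 * e.2 + c e.1)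
  invFun e := (e.1 - δ, ε (e.1 - δ) * (e.2 - c (e.1 - δ)))
  left_inv := by
    rintro ⟨j, s⟩
    simp only [add_sub_cancel_right]
    refine Prod.ext rfl ?_
    simp only
    rw [← mul_assoc, hε j, one_mul]
  right_inv := by
    rintro ⟨j, s⟩
    simp only [sub_add_cancel]
    refine Prod.ext rfl ?_
    simp only
    rw [← mul_assoc, hε (j - δ)]
    ring

@[simp] lemma affPerm_apply (δ : ZMod K) (ε c : ZMod K → ZMod m) (hε) (e : ZMod K × ZMod m) :
    affPerm δ ε c hε e = (e.1 + δ, ε e.1 * e.2 + c e.1) := rfl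

lemma fst_pow_apply (σ : Equiv.Perm (ZMod K × ZMod m)) (δ : ZMod K)
    (h1 : ∀ e, (σ e).1 = e.1 + δ) :
    ∀ (k : ℕ) (e), ((σ^k) e).1 = e.1 + (k : ZMod K) * δ := by
  intro k
  induction k with
  | zero => simp
  | succ i ih =>
    intro e
    rw [pow_succ', Equiv.Perm.mul_apply, h1 ((σ^i) e), ih e]
    push_cast
    ring

lemma allOrbitsSize_of (σ : Equiv.Perm (ZMod K × ZMod m)) (d : ℕ) (δ : ZMod K) (hd : 0 < d)
    (h1 : ∀ e, (σ e).1 = e.1 + δ) (h2 : σ^d = 1)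
    (h3 : ∀ k : ℕ, 0 < k → k < d → (k : ZMod K) * δ ≠ 0) : allOrbitsSize σ d := by
  rw [allOrbitsSize_iff]
  intro e
  apply minimalPeriod_eq_of σ d e hd
  · rw [h2]; rfl
  · intro k hk hkd hke
    have := fst_pow_apply σ δ h1 k e
    rw [hke] at this
    exact h3 k hk hkd (by linear_combination this.symm)
end Aff

section Transport
variable {α β : Type*}

def permCongrMul (E : α ≃ β) : Equiv.Perm α ≃* Equiv.Perm β where
  toEquiv := E.permCongr
  map_mul' f g := by
    ext b
    simp [Equiv.permCongr_apply]

@[simp] lemma permCongrMul_apply (E : α ≃ β) (σ : Equiv.Perm α) (b : β) :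
    permCongrMul E σ b = E (σ (E.symm b)) := rfl

lemma permOrbit_permCongr (E : α ≃ β) (σ : Equiv.Perm α) (e : α) :
    permOrbit (permCongrMul E σ) (E e) = E '' permOrbit σ e := by
  have hp : ∀ k : ℤ, (permCongrMul E σ)^k = permCongrMul E (σ^k) := fun k => (map_zpow _ _ _).symm
  ext f
  constructor
  · rintro ⟨k, rfl⟩
    exact ⟨(σ^k) e, ⟨k, rfl⟩, by rw [hp k, permCongrMul_apply, Equiv.symm_apply_apply]⟩
  · rintro ⟨g, ⟨k, rfl⟩, rfl⟩
    exact ⟨k, by rw [hp k, permCongrMul_apply, Equiv.symm_apply_apply]⟩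

lemma allOrbitsSize_permCongr (E : α ≃ β) (σ : Equiv.Perm α) (d : ℕ)
    (h : allOrbitsSize σ d) : allOrbitsSize (permCongrMul E σ) d := by
  intro f
  have hf : f = E (E.symm f) := by simp
  rw [hf, permOrbit_permCongr, Set.ncard_image_of_injective _ E.injective]
  exact h _

lemma DessinP_of_perms {n : ℕ} {a b c : ℕ} (α : Type*) [Fintype α] [DecidableEq α]
    (E : α ≃ Fin n) (x y : Equiv.Perm α)
    (hx : allOrbitsSize x a) (hy : allOrbitsSize y b) (hxy : allOrbitsSize (x * y)⁻¹ c)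
    (htrans : ∀ e f : α, ∃ g ∈ Subgroup.closure ({x, y} : Set (Equiv.Perm α)), g e = f)
    (hcard : Nat.card (Subgroup.closure ({x, y} : Set (Equiv.Perm α))) ≠ n) :
    DessinP n a b c := by
  set M := permCongrMul E with hM
  refine ⟨M x, M y, allOrbitsSize_permCongr E x a hx, allOrbitsSize_permCongr E y b hy, ?_, ?_, ?_⟩
  · have : (M x * M y)⁻¹ = M (x * y)⁻¹ := by rw [← map_mul, ← map_inv]
    rw [this]
    exact allOrbitsSize_permCongr E _ c hxy
  · have hcl : Subgroup.closure ({M x, M y} : Set (Equiv.Perm (Fin n)))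
        = Subgroup.map M.toMonoidHom (Subgroup.closure {x, y}) := by
      rw [MonoidHom.map_closure]
      congr 1
      rw [Set.image_pair]
      rfl
    intro e f
    obtain ⟨g, hg, hgef⟩ := htrans (E.symm e) (E.symm f)
    refine ⟨M g, ?_, ?_⟩
    · rw [hcl]
      exact ⟨g, hg, rfl⟩
    · rw [permCongrMul_apply, hgef]
      simp
  · have hcl : Subgroup.closure ({M x, M y} : Set (Equiv.Perm (Fin n)))
        = Subgroup.map M.toMonoidHom (Subgroup.closure {x, y}) := by
      rw [MonoidHom.map_closure]
      congr 1
      rw [Set.image_pair]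
      rfl
    rw [hcl]
    rwa [Nat.card_congr (Subgroup.equivMapOfInjective _ M.toMonoidHom
      (MulEquiv.injective M)).toEquiv.symm]
end Transport

lemma trans_of_reach {α : Type*} (x y : Equiv.Perm α) (t₀ : α)
    (h : ∀ e, ∃ g ∈ Subgroup.closure ({x, y} : Set (Equiv.Perm α)), g e = t₀) :
    ∀ e f, ∃ g ∈ Subgroup.closure ({x, y} : Set (Equiv.Perm α)), g e = f := by
  intro e f
  obtain ⟨g1, hg1, h1⟩ := h e
  obtain ⟨g2, hg2, h2⟩ := h f
  refine ⟨g2⁻¹ * g1, mul_mem (inv_mem hg2) hg1, ?_⟩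
  rw [Equiv.Perm.mul_apply, h1, ← h2]
  simp

lemma nonregular_card {α : Type*} [Fintype α] [DecidableEq α] (x y : Equiv.Perm α)
    (htrans : ∀ e f : α, ∃ g ∈ Subgroup.closure ({x, y} : Set (Equiv.Perm α)), g e = f)
    (u : Equiv.Perm α) (hu : u ∈ Subgroup.closure ({x, y} : Set (Equiv.Perm α)))
    (e₀ t₁ : α) (hfix : u e₀ = e₀) (hne : u t₁ ≠ t₁) :
    Nat.card (Subgroup.closure ({x, y} : Set (Equiv.Perm α))) ≠ Fintype.card α := by
  intro hcard
  set G := Subgroup.closure ({x, y} : Set (Equiv.Perm α)) with hG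
  haveI : Fintype G := Fintype.ofFinite _
  let φ : G → α := fun g => g.1 e₀
  have hsurj : Function.Surjective φ := by
    intro f
    obtain ⟨g, hg, hgf⟩ := htrans e₀ f
    exact ⟨⟨g, hg⟩, hgf⟩
  have hbij : Function.Bijective φ :=
    (Fintype.bijective_iff_surjective_and_card φ).mpr
      ⟨hsurj, by rw [← Nat.card_eq_fintype_card, hcard]⟩
  have h1 : (⟨u, hu⟩ : G) = ⟨1, one_mem _⟩ := by
    apply hbij.injective
    simpa [φ] using hfix
  have h2 : u = 1 := by
    have := congrArg Subtype.val h1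
    simpa using this
  rw [h2] at hne
  exact hne rfl


section C333
variable (p : ℕ)
def epsA : ZMod 3 → ZMod p := fun j => if j = 2 then 1 else -1
def cyA : ZMod 3 → ZMod p := fun j => if j = 2 then 0 else 1
lemma epsA_sq : ∀ j, epsA p j * epsA p j = 1 := by
  intro j
  unfold epsA
  split_ifs <;> norm_num

def x333 : Equiv.Perm (ZMod 3 × ZMod p) := affPerm 1 (epsA p) (fun _ => 0) (epsA_sq p)
def y333 : Equiv.Perm (ZMod 3 × ZMod p) := affPerm 1 (epsA p) (cyA p) (epsA_sq p)

lemma x333_0 (s : ZMod p) : x333 p (0, s) = (1, -s) := by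
  simp [x333, epsA, show (0:ZMod 3) ≠ 2 by decide, show (0:ZMod 3) + 1 = 1 by decide]
lemma x333_1 (s : ZMod p) : x333 p (1, s) = (2, -s) := by
  simp [x333, epsA, show (1:ZMod 3) ≠ 2 by decide, show (1:ZMod 3) + 1 = 2 by decide]
lemma x333_2 (s : ZMod p) : x333 p (2, s) = (0, s) := by
  simp [x333, epsA, show (2:ZMod 3) + 1 = 0 by decide]
lemma y333_0 (s : ZMod p) : y333 p (0, s) = (1, 1 - s) := by
  simp [y333, epsA, cyA, show (0:ZMod 3) ≠ 2 by decide, show (0:ZMod 3) + 1 = 1 by decide]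
  ring
lemma y333_1 (s : ZMod p) : y333 p (1, s) = (2, 1 - s) := by
  simp [y333, epsA, cyA, show (1:ZMod 3) ≠ 2 by decide, show (1:ZMod 3) + 1 = 2 by decide]
  ring
lemma y333_2 (s : ZMod p) : y333 p (2, s) = (0, s) := by
  simp [y333, epsA, cyA, show (2:ZMod 3) + 1 = 0 by decide]


lemma zmod3_cases : ∀ j : ZMod 3, j = 0 ∨ j = 1 ∨ j = 2 := by decide

lemma xy333_0 (s : ZMod p) : (x333 p * y333 p) (0, s) = (2, s - 1) := by
  rw [Equiv.Perm.mul_apply, y333_0, x333_1, neg_sub]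
lemma xy333_1 (s : ZMod p) : (x333 p * y333 p) (1, s) = (0, 1 - s) := by
  rw [Equiv.Perm.mul_apply, y333_1, x333_2]
lemma xy333_2 (s : ZMod p) : (x333 p * y333 p) (2, s) = (1, -s) := by
  rw [Equiv.Perm.mul_apply, y333_2, x333_0]

lemma x333_cube : (x333 p)^3 = 1 := by
  apply Equiv.ext
  rintro ⟨j, s⟩
  rcases zmod3_cases j with rfl | rfl | rfl <;>
    simp [pow_succ, Equiv.Perm.mul_apply, x333_0, x333_1, x333_2]

lemma y333_cube : (y333 p)^3 = 1 := by
  apply Equiv.ext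
  rintro ⟨j, s⟩
  rcases zmod3_cases j with rfl | rfl | rfl <;>
    simp [pow_succ, Equiv.Perm.mul_apply, y333_0, y333_1, y333_2, sub_sub_cancel]

lemma perm_cube_apply {α : Type*} (w : Equiv.Perm α) (e : α) : (w^3) e = w (w (w e)) := by
  rw [pow_succ, pow_succ, pow_one]
  rfl

lemma xy333_cube : (x333 p * y333 p)^3 = 1 := by
  apply Equiv.ext
  rintro ⟨j, s⟩
  rcases zmod3_cases j with rfl | rfl | rfl
  · rw [perm_cube_apply, xy333_0, xy333_2, xy333_1, Equiv.Perm.one_apply]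
    exact Prod.ext rfl (by ring)
  · rw [perm_cube_apply, xy333_1, xy333_0, xy333_2, Equiv.Perm.one_apply]
    exact Prod.ext rfl (by ring)
  · rw [perm_cube_apply, xy333_2, xy333_1, xy333_0, Equiv.Perm.one_apply]
    exact Prod.ext rfl (by ring)

lemma x333_orbits : allOrbitsSize (x333 p) 3 := by
  apply allOrbitsSize_of _ 3 1 (by norm_num) (fun e => rfl) (x333_cube p)
  intro k hk hkd
  interval_cases k <;> decide

lemma y333_orbits : allOrbitsSize (y333 p) 3 := by
  apply allOrbitsSize_of _ 3 1 (by norm_num) (fun e => rfl) (y333_cube p)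
  intro k hk hkd
  interval_cases k <;> decide

lemma xy333_orbits : allOrbitsSize (x333 p * y333 p) 3 := by
  apply allOrbitsSize_of _ 3 2 (by norm_num) ?_ (xy333_cube p)
  · intro k hk hkd
    interval_cases k <;> decide
  · rintro ⟨j, s⟩
    rcases zmod3_cases j with rfl | rfl | rfl
    · rw [xy333_0]; exact (by decide : (2:ZMod 3) = 0 + 2)
    · rw [xy333_1]; exact (by decide : (0:ZMod 3) = 1 + 2)
    · rw [xy333_2]; exact (by decide : (1:ZMod 3) = 2 + 2)

lemma x333_inv_0 (s : ZMod p) : (x333 p)⁻¹ (0, s) = (2, s) :=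
  (Equiv.Perm.eq_inv_iff_eq.mpr (x333_2 p s)).symm
lemma x333_inv_1 (s : ZMod p) : (x333 p)⁻¹ (1, s) = (0, -s) := by
  refine (Equiv.Perm.eq_inv_iff_eq.mpr ?_).symm
  rw [x333_0, neg_neg]
lemma x333_inv_2 (s : ZMod p) : (x333 p)⁻¹ (2, s) = (1, -s) := by
  refine (Equiv.Perm.eq_inv_iff_eq.mpr ?_).symm
  rw [x333_1, neg_neg]

lemma t333_apply (s : ZMod p) : ((x333 p)⁻¹ * y333 p) (0, s) = (0, s - 1) := by
  rw [Equiv.Perm.mul_apply, y333_0, x333_inv_1, neg_sub]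

lemma t333_pow (k : ℕ) (s : ZMod p) :
    (((x333 p)⁻¹ * y333 p)^k) (0, s) = (0, s - k) := by
  induction k with
  | zero => simp
  | succ i ih =>
    rw [pow_succ', Equiv.Perm.mul_apply, ih, t333_apply]
    push_cast
    exact Prod.ext rfl (by ring)

def zmodFin (q : ℕ) [NeZero q] : ZMod q ≃ Fin q := by
  cases q with
  | zero => exact absurd rfl (NeZero.ne 0)
  | succ i => exact Equiv.refl _

lemma C333 (hp : 2 ≤ p) : DessinP (p*3) 3 3 3 := by
  haveI : NeZero p := ⟨by omega⟩
  haveI : Fact (1 < p) := ⟨by omega⟩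
  set x := x333 p with hxd
  set y := y333 p with hyd
  have reach : ∀ e, ∃ g ∈ Subgroup.closure ({x, y} : Set (Equiv.Perm (ZMod 3 × ZMod p))),
      g e = ((0 : ZMod 3), (0 : ZMod p)) := by
    rintro ⟨j, s⟩
    have htmem : x⁻¹ * y ∈ Subgroup.closure ({x, y} : Set (Equiv.Perm (ZMod 3 × ZMod p))) :=
      mul_mem (inv_mem (mem_closure_pair_left x y)) (mem_closure_pair_right x y)
    have hxmem : x ∈ Subgroup.closure ({x, y} : Set (Equiv.Perm (ZMod 3 × ZMod p))) :=
      mem_closure_pair_left x y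
    have hval : ∀ u : ZMod p, u - ((u.val : ℕ) : ZMod p) = 0 := by
      intro u
      rw [ZMod.natCast_val, ZMod.cast_id, sub_self]
    rcases zmod3_cases j with rfl | rfl | rfl
    · exact ⟨(x⁻¹ * y)^(s.val), pow_mem htmem _,
        by rw [t333_pow]; exact Prod.ext rfl (hval s)⟩
    · refine ⟨(x⁻¹ * y)^((-s).val) * x^2, mul_mem (pow_mem htmem _) (pow_mem hxmem _), ?_⟩
      have hx2 : (x^2) (1, s) = (0, -s) := by
        rw [pow_two, Equiv.Perm.mul_apply, hxd, x333_1, x333_2]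
      rw [Equiv.Perm.mul_apply, hx2, t333_pow]
      exact Prod.ext rfl (hval (-s))
    · refine ⟨(x⁻¹ * y)^(s.val) * x, mul_mem (pow_mem htmem _) hxmem, ?_⟩
      rw [Equiv.Perm.mul_apply, hxd, x333_2, t333_pow]
      exact Prod.ext rfl (hval s)
  have htrans := trans_of_reach x y _ reach
  have hu : y * x⁻¹ ∈ Subgroup.closure ({x, y} : Set (Equiv.Perm (ZMod 3 × ZMod p))) :=
    mul_mem (mem_closure_pair_right x y) (inv_mem (mem_closure_pair_left x y))
  have hfix : (y * x⁻¹) ((0 : ZMod 3), (0 : ZMod p)) = ((0 : ZMod 3), (0 : ZMod p)) := by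
    rw [Equiv.Perm.mul_apply, hxd, x333_inv_0, hyd, y333_2]
  have hne : (y * x⁻¹) ((1 : ZMod 3), (0 : ZMod p)) ≠ ((1 : ZMod 3), (0 : ZMod p)) := by
    rw [Equiv.Perm.mul_apply, hxd, x333_inv_1, neg_zero, hyd, y333_0]
    intro hcontra
    rw [Prod.ext_iff] at hcontra
    have h2 := hcontra.2
    simp only [sub_zero] at h2
    exact one_ne_zero h2
  have hcard0 := nonregular_card x y htrans _ hu _ _ hfix hne
  have hcardval : Fintype.card (ZMod 3 × ZMod p) = p * 3 := by
    rw [Fintype.card_prod, ZMod.card, ZMod.card]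
    ring
  rw [hcardval] at hcard0
  exact DessinP_of_perms _
    (((Equiv.prodCongr (zmodFin 3) (zmodFin p)).trans (Equiv.prodComm _ _)).trans finProdFinEquiv)
    x y (x333_orbits p) (y333_orbits p)
    ((allOrbitsSize_inv_iff _ _).mpr (xy333_orbits p)) htrans hcard0
end C333

lemma perm_pow2_apply {α : Type*} (w : Equiv.Perm α) (e : α) : (w^2) e = w (w e) := by
  rw [pow_two]; rfl
lemma perm_pow4_apply {α : Type*} (w : Equiv.Perm α) (e : α) :
    (w^4) e = w (w (w (w e))) := by
  rw [show (4:ℕ) = 2+2 by rfl, pow_add, Equiv.Perm.mul_apply, perm_pow2_apply, perm_pow2_apply]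
lemma perm_pow5_apply {α : Type*} (w : Equiv.Perm α) (e : α) :
    (w^5) e = w (w (w (w (w e)))) := by
  rw [show (5:ℕ) = 4+1 by rfl, pow_add, pow_one, Equiv.Perm.mul_apply, perm_pow4_apply]
lemma perm_pow6_apply {α : Type*} (w : Equiv.Perm α) (e : α) :
    (w^6) e = w (w (w (w (w (w e))))) := by
  rw [show (6:ℕ) = 5+1 by rfl, pow_add, pow_one, Equiv.Perm.mul_apply, perm_pow5_apply]
lemma perm_pow3_apply {α : Type*} (w : Equiv.Perm α) (e : α) : (w^3) e = w (w (w e)) :=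
  perm_cube_apply w e

section C244
variable (q : ℕ)
lemma zmod4_cases : ∀ j : ZMod 4, j = 0 ∨ j = 1 ∨ j = 2 ∨ j = 3 := by decide
def epsB : ZMod 4 → ZMod q := fun _ => -1
def cxB : ZMod 4 → ZMod q := fun j => if j = 1 ∨ j = 3 then 1 else 0
def epsC : ZMod 4 → ZMod q := fun j => if j = 0 ∨ j = 2 then -1 else 1
lemma epsB_sq : ∀ j, epsB q j * epsB q j = 1 := by intro j; simp [epsB]
lemma epsC_sq : ∀ j, epsC q j * epsC q j = 1 := by
  intro j; unfold epsC; split_ifs <;> norm_num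
def x244 : Equiv.Perm (ZMod 4 × ZMod q) := affPerm 2 (epsB q) (cxB q) (epsB_sq q)
def y244 : Equiv.Perm (ZMod 4 × ZMod q) := affPerm 1 (epsC q) (fun _ => 0) (epsC_sq q)

lemma x244_0 (s : ZMod q) : x244 q (0, s) = (2, -s) := by
  simp [x244, epsB, cxB, show ¬((0:ZMod 4) = 1 ∨ (0:ZMod 4) = 3) by decide,
    show (0:ZMod 4) + 2 = 2 by decide]
lemma x244_1 (s : ZMod q) : x244 q (1, s) = (3, 1 - s) := by
  simp [x244, epsB, cxB, show ((1:ZMod 4) = 1 ∨ (1:ZMod 4) = 3) by decide,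
    show (1:ZMod 4) + 2 = 3 by decide]
  ring
lemma x244_2 (s : ZMod q) : x244 q (2, s) = (0, -s) := by
  simp [x244, epsB, cxB, show ¬((2:ZMod 4) = 1 ∨ (2:ZMod 4) = 3) by decide,
    show (2:ZMod 4) + 2 = 0 by decide]
lemma x244_3 (s : ZMod q) : x244 q (3, s) = (1, 1 - s) := by
  simp [x244, epsB, cxB, show ((3:ZMod 4) = 1 ∨ (3:ZMod 4) = 3) by decide,
    show (3:ZMod 4) + 2 = 1 by decide]
  ring
lemma y244_0 (s : ZMod q) : y244 q (0, s) = (1, -s) := by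
  simp [y244, epsC, show ((0:ZMod 4) = 0 ∨ (0:ZMod 4) = 2) by decide,
    show (0:ZMod 4) + 1 = 1 by decide]
lemma y244_1 (s : ZMod q) : y244 q (1, s) = (2, s) := by
  simp [y244, epsC, show ¬((1:ZMod 4) = 0 ∨ (1:ZMod 4) = 2) by decide,
    show (1:ZMod 4) + 1 = 2 by decide]
lemma y244_2 (s : ZMod q) : y244 q (2, s) = (3, -s) := by
  simp [y244, epsC, show ((2:ZMod 4) = 0 ∨ (2:ZMod 4) = 2) by decide,
    show (2:ZMod 4) + 1 = 3 by decide]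
lemma y244_3 (s : ZMod q) : y244 q (3, s) = (0, s) := by
  simp [y244, epsC, show ¬((3:ZMod 4) = 0 ∨ (3:ZMod 4) = 2) by decide,
    show (3:ZMod 4) + 1 = 0 by decide]

lemma xy244_0 (s : ZMod q) : (x244 q * y244 q) (0, s) = (3, 1 + s) := by
  rw [Equiv.Perm.mul_apply, y244_0, x244_1, sub_neg_eq_add]
lemma xy244_1 (s : ZMod q) : (x244 q * y244 q) (1, s) = (0, -s) := by
  rw [Equiv.Perm.mul_apply, y244_1, x244_2]
lemma xy244_2 (s : ZMod q) : (x244 q * y244 q) (2, s) = (1, 1 + s) := by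
  rw [Equiv.Perm.mul_apply, y244_2, x244_3, sub_neg_eq_add]
lemma xy244_3 (s : ZMod q) : (x244 q * y244 q) (3, s) = (2, -s) := by
  rw [Equiv.Perm.mul_apply, y244_3, x244_0]

lemma x244_sq : (x244 q)^2 = 1 := by
  apply Equiv.ext
  rintro ⟨j, s⟩
  rcases zmod4_cases j with rfl | rfl | rfl | rfl
  · rw [perm_pow2_apply, x244_0, x244_2, Equiv.Perm.one_apply, neg_neg]
  · rw [perm_pow2_apply, x244_1, x244_3, Equiv.Perm.one_apply]
    exact Prod.ext rfl (by ring)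
  · rw [perm_pow2_apply, x244_2, x244_0, Equiv.Perm.one_apply, neg_neg]
  · rw [perm_pow2_apply, x244_3, x244_1, Equiv.Perm.one_apply]
    exact Prod.ext rfl (by ring)

lemma y244_pow4 : (y244 q)^4 = 1 := by
  apply Equiv.ext
  rintro ⟨j, s⟩
  rcases zmod4_cases j with rfl | rfl | rfl | rfl
  · rw [perm_pow4_apply, y244_0, y244_1, y244_2, y244_3, Equiv.Perm.one_apply, neg_neg]
  · rw [perm_pow4_apply, y244_1, y244_2, y244_3, y244_0, Equiv.Perm.one_apply, neg_neg]
  · rw [perm_pow4_apply, y244_2, y244_3, y244_0, y244_1, Equiv.Perm.one_apply, neg_neg]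
  · rw [perm_pow4_apply, y244_3, y244_0, y244_1, y244_2, Equiv.Perm.one_apply, neg_neg]

lemma xy244_pow4 : (x244 q * y244 q)^4 = 1 := by
  apply Equiv.ext
  rintro ⟨j, s⟩
  rcases zmod4_cases j with rfl | rfl | rfl | rfl
  · rw [perm_pow4_apply, xy244_0, xy244_3, xy244_2, xy244_1, Equiv.Perm.one_apply]
    exact Prod.ext rfl (by ring)
  · rw [perm_pow4_apply, xy244_1, xy244_0, xy244_3, xy244_2, Equiv.Perm.one_apply]
    exact Prod.ext rfl (by ring)
  · rw [perm_pow4_apply, xy244_2, xy244_1, xy244_0, xy244_3, Equiv.Perm.one_apply]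
    exact Prod.ext rfl (by ring)
  · rw [perm_pow4_apply, xy244_3, xy244_2, xy244_1, xy244_0, Equiv.Perm.one_apply]
    exact Prod.ext rfl (by ring)

lemma x244_orbits : allOrbitsSize (x244 q) 2 := by
  apply allOrbitsSize_of _ 2 2 (by norm_num) (fun e => rfl) (x244_sq q)
  intro k hk hkd
  interval_cases k <;> decide

lemma y244_orbits : allOrbitsSize (y244 q) 4 := by
  apply allOrbitsSize_of _ 4 1 (by norm_num) (fun e => rfl) (y244_pow4 q)
  intro k hk hkd
  interval_cases k <;> decide

lemma xy244_orbits : allOrbitsSize (x244 q * y244 q) 4 := by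
  apply allOrbitsSize_of _ 4 3 (by norm_num) ?_ (xy244_pow4 q)
  · intro k hk hkd
    interval_cases k <;> decide
  · rintro ⟨j, s⟩
    rcases zmod4_cases j with rfl | rfl | rfl | rfl
    · rw [xy244_0]; exact (by decide : (3:ZMod 4) = 0 + 3)
    · rw [xy244_1]; exact (by decide : (0:ZMod 4) = 1 + 3)
    · rw [xy244_2]; exact (by decide : (1:ZMod 4) = 2 + 3)
    · rw [xy244_3]; exact (by decide : (2:ZMod 4) = 3 + 3)

lemma u244_1 (s : ZMod q) : (x244 q * (y244 q)^2) (1, s) = (1, 1 + s) := by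
  rw [Equiv.Perm.mul_apply, perm_pow2_apply, y244_1, y244_2, x244_3, sub_neg_eq_add]
lemma u244_0 (s : ZMod q) : (x244 q * (y244 q)^2) (0, s) = (0, s) := by
  rw [Equiv.Perm.mul_apply, perm_pow2_apply, y244_0, y244_1, x244_2, neg_neg]
lemma u244_pow (k : ℕ) (s : ZMod q) :
    ((x244 q * (y244 q)^2)^k) (1, s) = (1, s + k) := by
  induction k with
  | zero => simp
  | succ i ih =>
    rw [pow_succ', Equiv.Perm.mul_apply, ih, u244_1]
    push_cast
    exact Prod.ext rfl (by ring)

lemma C244 (hq : 2 ≤ q) : DessinP (q*4) 2 4 4 := by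
  haveI : NeZero q := ⟨by omega⟩
  haveI : Fact (1 < q) := ⟨by omega⟩
  set x := x244 q with hxd
  set y := y244 q with hyd
  set u := x244 q * (y244 q)^2 with hud
  have humem : u ∈ Subgroup.closure ({x, y} : Set (Equiv.Perm (ZMod 4 × ZMod q))) :=
    mul_mem (mem_closure_pair_left x y) (pow_mem (mem_closure_pair_right x y) _)
  have hymem : y ∈ Subgroup.closure ({x, y} : Set (Equiv.Perm (ZMod 4 × ZMod q))) :=
    mem_closure_pair_right x y
  have hval : ∀ v : ZMod q, v + (((-v).val : ℕ) : ZMod q) = 0 := by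
    intro v
    rw [ZMod.natCast_val, ZMod.cast_id]
    ring
  have reach : ∀ e, ∃ g ∈ Subgroup.closure ({x, y} : Set (Equiv.Perm (ZMod 4 × ZMod q))),
      g e = ((1 : ZMod 4), (0 : ZMod q)) := by
    rintro ⟨j, s⟩
    rcases zmod4_cases j with rfl | rfl | rfl | rfl
    · refine ⟨u^((s).val) * y, mul_mem (pow_mem humem _) hymem, ?_⟩
      rw [Equiv.Perm.mul_apply, hyd, y244_0, hud, u244_pow]
      refine Prod.ext rfl ?_
      rw [ZMod.natCast_val, ZMod.cast_id]
      ring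
    · exact ⟨u^((-s).val), pow_mem humem _, by rw [hud, u244_pow]; exact Prod.ext rfl (hval s)⟩
    · refine ⟨u^((-s).val) * y^3, mul_mem (pow_mem humem _) (pow_mem hymem _), ?_⟩
      have hy3 : (y^3) (2, s) = (1, s) := by
        rw [perm_pow3_apply, hyd, y244_2, y244_3, y244_0, neg_neg]
      rw [Equiv.Perm.mul_apply, hy3, hud, u244_pow]
      exact Prod.ext rfl (hval s)
    · refine ⟨u^((s).val) * y^2, mul_mem (pow_mem humem _) (pow_mem hymem _), ?_⟩
      have hy2 : (y^2) (3, s) = (1, -s) := by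
        rw [perm_pow2_apply, hyd, y244_3, y244_0]
      rw [Equiv.Perm.mul_apply, hy2, hud, u244_pow]
      refine Prod.ext rfl ?_
      rw [ZMod.natCast_val, ZMod.cast_id]
      ring
  have htrans := trans_of_reach x y _ reach
  have hfix : u ((0 : ZMod 4), (0 : ZMod q)) = ((0 : ZMod 4), (0 : ZMod q)) := by
    rw [hud, u244_0]
  have hne : u ((1 : ZMod 4), (0 : ZMod q)) ≠ ((1 : ZMod 4), (0 : ZMod q)) := by
    rw [hud, u244_1]
    intro hcontra
    rw [Prod.ext_iff] at hcontra
    have h2 := hcontra.2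
    simp only [add_zero] at h2
    exact one_ne_zero h2
  have hcard0 := nonregular_card x y htrans _ humem _ _ hfix hne
  have hcardval : Fintype.card (ZMod 4 × ZMod q) = q * 4 := by
    rw [Fintype.card_prod, ZMod.card, ZMod.card]
    ring
  rw [hcardval] at hcard0
  exact DessinP_of_perms _
    (((Equiv.prodCongr (zmodFin 4) (zmodFin q)).trans (Equiv.prodComm _ _)).trans finProdFinEquiv)
    x y (x244_orbits q) (y244_orbits q)
    ((allOrbitsSize_inv_iff _ _).mpr (xy244_orbits q)) htrans hcard0
end C244

section C236
variable (r : ℕ)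
lemma zmod6_cases : ∀ j : ZMod 6, j = 0 ∨ j = 1 ∨ j = 2 ∨ j = 3 ∨ j = 4 ∨ j = 5 := by decide
def epsD : ZMod 6 → ZMod r := fun _ => -1
def cxD : ZMod 6 → ZMod r := fun j => if j = 0 ∨ j = 3 then 0 else 1
def epsE : ZMod 6 → ZMod r := fun j => if j = 1 ∨ j = 4 then 1 else -1
def cyE : ZMod 6 → ZMod r := fun j => if j = 1 ∨ j = 4 then 0 else 1
lemma epsD_sq : ∀ j, epsD r j * epsD r j = 1 := by intro j; simp [epsD]
lemma epsE_sq : ∀ j, epsE r j * epsE r j = 1 := by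
  intro j; unfold epsE; split_ifs <;> norm_num
def x236 : Equiv.Perm (ZMod 6 × ZMod r) := affPerm 3 (epsD r) (cxD r) (epsD_sq r)
def y236 : Equiv.Perm (ZMod 6 × ZMod r) := affPerm 2 (epsE r) (cyE r) (epsE_sq r)

lemma x236_0 (s : ZMod r) : x236 r (0, s) = (3, -s) := by
  simp [x236, epsD, cxD, show ((0:ZMod 6) = 0 ∨ (0:ZMod 6) = 3) by decide,
    show (0:ZMod 6) + 3 = 3 by decide]
lemma x236_1 (s : ZMod r) : x236 r (1, s) = (4, 1 - s) := by
  simp [x236, epsD, cxD, show ¬((1:ZMod 6) = 0 ∨ (1:ZMod 6) = 3) by decide,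
    show (1:ZMod 6) + 3 = 4 by decide]
  ring
lemma x236_2 (s : ZMod r) : x236 r (2, s) = (5, 1 - s) := by
  simp [x236, epsD, cxD, show ¬((2:ZMod 6) = 0 ∨ (2:ZMod 6) = 3) by decide,
    show (2:ZMod 6) + 3 = 5 by decide]
  ring
lemma x236_3 (s : ZMod r) : x236 r (3, s) = (0, -s) := by
  simp [x236, epsD, cxD, show ((3:ZMod 6) = 0 ∨ (3:ZMod 6) = 3) by decide,
    show (3:ZMod 6) + 3 = 0 by decide]
lemma x236_4 (s : ZMod r) : x236 r (4, s) = (1, 1 - s) := by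
  simp [x236, epsD, cxD, show ¬((4:ZMod 6) = 0 ∨ (4:ZMod 6) = 3) by decide,
    show (4:ZMod 6) + 3 = 1 by decide]
  ring
lemma x236_5 (s : ZMod r) : x236 r (5, s) = (2, 1 - s) := by
  simp [x236, epsD, cxD, show ¬((5:ZMod 6) = 0 ∨ (5:ZMod 6) = 3) by decide,
    show (5:ZMod 6) + 3 = 2 by decide]
  ring
lemma y236_0 (s : ZMod r) : y236 r (0, s) = (2, 1 - s) := by
  simp [y236, epsE, cyE, show ¬((0:ZMod 6) = 1 ∨ (0:ZMod 6) = 4) by decide,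
    show (0:ZMod 6) + 2 = 2 by decide]
  ring
lemma y236_1 (s : ZMod r) : y236 r (1, s) = (3, s) := by
  simp [y236, epsE, cyE, show ((1:ZMod 6) = 1 ∨ (1:ZMod 6) = 4) by decide,
    show (1:ZMod 6) + 2 = 3 by decide]
lemma y236_2 (s : ZMod r) : y236 r (2, s) = (4, 1 - s) := by
  simp [y236, epsE, cyE, show ¬((2:ZMod 6) = 1 ∨ (2:ZMod 6) = 4) by decide,
    show (2:ZMod 6) + 2 = 4 by decide]
  ring
lemma y236_3 (s : ZMod r) : y236 r (3, s) = (5, 1 - s) := by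
  simp [y236, epsE, cyE, show ¬((3:ZMod 6) = 1 ∨ (3:ZMod 6) = 4) by decide,
    show (3:ZMod 6) + 2 = 5 by decide]
  ring
lemma y236_4 (s : ZMod r) : y236 r (4, s) = (0, s) := by
  simp [y236, epsE, cyE, show ((4:ZMod 6) = 1 ∨ (4:ZMod 6) = 4) by decide,
    show (4:ZMod 6) + 2 = 0 by decide]
lemma y236_5 (s : ZMod r) : y236 r (5, s) = (1, 1 - s) := by
  simp [y236, epsE, cyE, show ¬((5:ZMod 6) = 1 ∨ (5:ZMod 6) = 4) by decide,
    show (5:ZMod 6) + 2 = 1 by decide]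
  ring

lemma xy236_0 (s : ZMod r) : (x236 r * y236 r) (0, s) = (5, s) := by
  rw [Equiv.Perm.mul_apply, y236_0, x236_2, sub_sub_cancel]
lemma xy236_1 (s : ZMod r) : (x236 r * y236 r) (1, s) = (0, -s) := by
  rw [Equiv.Perm.mul_apply, y236_1, x236_3]
lemma xy236_2 (s : ZMod r) : (x236 r * y236 r) (2, s) = (1, s) := by
  rw [Equiv.Perm.mul_apply, y236_2, x236_4, sub_sub_cancel]
lemma xy236_3 (s : ZMod r) : (x236 r * y236 r) (3, s) = (2, s) := by
  rw [Equiv.Perm.mul_apply, y236_3, x236_5, sub_sub_cancel]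
lemma xy236_4 (s : ZMod r) : (x236 r * y236 r) (4, s) = (3, -s) := by
  rw [Equiv.Perm.mul_apply, y236_4, x236_0]
lemma xy236_5 (s : ZMod r) : (x236 r * y236 r) (5, s) = (4, s) := by
  rw [Equiv.Perm.mul_apply, y236_5, x236_1, sub_sub_cancel]

lemma x236_sq : (x236 r)^2 = 1 := by
  apply Equiv.ext
  rintro ⟨j, s⟩
  rcases zmod6_cases j with rfl | rfl | rfl | rfl | rfl | rfl
  · rw [perm_pow2_apply, x236_0, x236_3, Equiv.Perm.one_apply, neg_neg]
  · rw [perm_pow2_apply, x236_1, x236_4, Equiv.Perm.one_apply, sub_sub_cancel]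
  · rw [perm_pow2_apply, x236_2, x236_5, Equiv.Perm.one_apply, sub_sub_cancel]
  · rw [perm_pow2_apply, x236_3, x236_0, Equiv.Perm.one_apply, neg_neg]
  · rw [perm_pow2_apply, x236_4, x236_1, Equiv.Perm.one_apply, sub_sub_cancel]
  · rw [perm_pow2_apply, x236_5, x236_2, Equiv.Perm.one_apply, sub_sub_cancel]

lemma y236_pow3 : (y236 r)^3 = 1 := by
  apply Equiv.ext
  rintro ⟨j, s⟩
  rcases zmod6_cases j with rfl | rfl | rfl | rfl | rfl | rfl
  · rw [perm_pow3_apply, y236_0, y236_2, y236_4, Equiv.Perm.one_apply, sub_sub_cancel]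
  · rw [perm_pow3_apply, y236_1, y236_3, y236_5, Equiv.Perm.one_apply, sub_sub_cancel]
  · rw [perm_pow3_apply, y236_2, y236_4, y236_0, Equiv.Perm.one_apply, sub_sub_cancel]
  · rw [perm_pow3_apply, y236_3, y236_5, y236_1, Equiv.Perm.one_apply, sub_sub_cancel]
  · rw [perm_pow3_apply, y236_4, y236_0, y236_2, Equiv.Perm.one_apply, sub_sub_cancel]
  · rw [perm_pow3_apply, y236_5, y236_1, y236_3, Equiv.Perm.one_apply, sub_sub_cancel]

lemma xy236_pow6 : (x236 r * y236 r)^6 = 1 := by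
  apply Equiv.ext
  rintro ⟨j, s⟩
  rcases zmod6_cases j with rfl | rfl | rfl | rfl | rfl | rfl
  · rw [perm_pow6_apply, xy236_0, xy236_5, xy236_4, xy236_3, xy236_2, xy236_1,
      Equiv.Perm.one_apply, neg_neg]
  · rw [perm_pow6_apply, xy236_1, xy236_0, xy236_5, xy236_4, xy236_3, xy236_2,
      Equiv.Perm.one_apply, neg_neg]
  · rw [perm_pow6_apply, xy236_2, xy236_1, xy236_0, xy236_5, xy236_4, xy236_3,
      Equiv.Perm.one_apply, neg_neg]
  · rw [perm_pow6_apply, xy236_3, xy236_2, xy236_1, xy236_0, xy236_5, xy236_4,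
      Equiv.Perm.one_apply, neg_neg]
  · rw [perm_pow6_apply, xy236_4, xy236_3, xy236_2, xy236_1, xy236_0, xy236_5,
      Equiv.Perm.one_apply, neg_neg]
  · rw [perm_pow6_apply, xy236_5, xy236_4, xy236_3, xy236_2, xy236_1, xy236_0,
      Equiv.Perm.one_apply, neg_neg]

lemma x236_orbits : allOrbitsSize (x236 r) 2 := by
  apply allOrbitsSize_of _ 2 3 (by norm_num) (fun e => rfl) (x236_sq r)
  intro k hk hkd
  interval_cases k <;> decide

lemma y236_orbits : allOrbitsSize (y236 r) 3 := by
  apply allOrbitsSize_of _ 3 2 (by norm_num) (fun e => rfl) (y236_pow3 r)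
  intro k hk hkd
  interval_cases k <;> decide

lemma xy236_orbits : allOrbitsSize (x236 r * y236 r) 6 := by
  apply allOrbitsSize_of _ 6 5 (by norm_num) ?_ (xy236_pow6 r)
  · intro k hk hkd
    interval_cases k <;> decide
  · rintro ⟨j, s⟩
    rcases zmod6_cases j with rfl | rfl | rfl | rfl | rfl | rfl
    · rw [xy236_0]; exact (by decide : (5:ZMod 6) = 0 + 5)
    · rw [xy236_1]; exact (by decide : (0:ZMod 6) = 1 + 5)
    · rw [xy236_2]; exact (by decide : (1:ZMod 6) = 2 + 5)
    · rw [xy236_3]; exact (by decide : (2:ZMod 6) = 3 + 5)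
    · rw [xy236_4]; exact (by decide : (3:ZMod 6) = 4 + 5)
    · rw [xy236_5]; exact (by decide : (4:ZMod 6) = 5 + 5)

lemma u236_0 (s : ZMod r) : (x236 r * (x236 r * y236 r)^3) (0, s) = (0, s) := by
  rw [Equiv.Perm.mul_apply, perm_pow3_apply, xy236_0, xy236_5, xy236_4, x236_3, neg_neg]
lemma u236_1 (s : ZMod r) : (x236 r * (x236 r * y236 r)^3) (1, s) = (1, 1 + s) := by
  rw [Equiv.Perm.mul_apply, perm_pow3_apply, xy236_1, xy236_0, xy236_5, x236_4, sub_neg_eq_add]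
lemma u236_pow (k : ℕ) (s : ZMod r) :
    ((x236 r * (x236 r * y236 r)^3)^k) (1, s) = (1, s + k) := by
  induction k with
  | zero => simp
  | succ i ih =>
    rw [pow_succ', Equiv.Perm.mul_apply, ih, u236_1]
    push_cast
    exact Prod.ext rfl (by ring)

lemma C236 (hr : 2 ≤ r) : DessinP (r*6) 2 3 6 := by
  haveI : NeZero r := ⟨by omega⟩
  haveI : Fact (1 < r) := ⟨by omega⟩
  set x := x236 r with hxd
  set y := y236 r with hyd
  set w := x236 r * y236 r with hwd
  set u := x236 r * (x236 r * y236 r)^3 with hud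
  have hxmem : x ∈ Subgroup.closure ({x, y} : Set (Equiv.Perm (ZMod 6 × ZMod r))) :=
    mem_closure_pair_left x y
  have hymem : y ∈ Subgroup.closure ({x, y} : Set (Equiv.Perm (ZMod 6 × ZMod r))) :=
    mem_closure_pair_right x y
  have hwmem : w ∈ Subgroup.closure ({x, y} : Set (Equiv.Perm (ZMod 6 × ZMod r))) :=
    mul_mem hxmem hymem
  have humem : u ∈ Subgroup.closure ({x, y} : Set (Equiv.Perm (ZMod 6 × ZMod r))) :=
    mul_mem hxmem (pow_mem hwmem _)
  have hvalp : ∀ v : ZMod r, v + (((-v).val : ℕ) : ZMod r) = 0 := by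
    intro v
    rw [ZMod.natCast_val, ZMod.cast_id]
    ring
  have hvalm : ∀ v : ZMod r, -v + (((v).val : ℕ) : ZMod r) = 0 := by
    intro v
    rw [ZMod.natCast_val, ZMod.cast_id]
    ring
  have reach : ∀ e, ∃ g ∈ Subgroup.closure ({x, y} : Set (Equiv.Perm (ZMod 6 × ZMod r))),
      g e = ((1 : ZMod 6), (0 : ZMod r)) := by
    rintro ⟨j, s⟩
    rcases zmod6_cases j with rfl | rfl | rfl | rfl | rfl | rfl
    · refine ⟨u^(s.val) * w^5, mul_mem (pow_mem humem _) (pow_mem hwmem _), ?_⟩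
      have hw5 : (w^5) ((0:ZMod 6), s) = (1, -s) := by
        rw [perm_pow5_apply, hwd, xy236_0, xy236_5, xy236_4, xy236_3, xy236_2]
      rw [Equiv.Perm.mul_apply, hw5, hud, u236_pow]
      exact Prod.ext rfl (hvalm s)
    · exact ⟨u^((-s).val), pow_mem humem _, by rw [hud, u236_pow]; exact Prod.ext rfl (hvalp s)⟩
    · refine ⟨u^((-s).val) * w, mul_mem (pow_mem humem _) hwmem, ?_⟩
      rw [Equiv.Perm.mul_apply, hwd, xy236_2, hud, u236_pow]
      exact Prod.ext rfl (hvalp s)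
    · refine ⟨u^((-s).val) * w^2, mul_mem (pow_mem humem _) (pow_mem hwmem _), ?_⟩
      have hw2 : (w^2) ((3:ZMod 6), s) = (1, s) := by
        rw [perm_pow2_apply, hwd, xy236_3, xy236_2]
      rw [Equiv.Perm.mul_apply, hw2, hud, u236_pow]
      exact Prod.ext rfl (hvalp s)
    · refine ⟨u^(s.val) * w^3, mul_mem (pow_mem humem _) (pow_mem hwmem _), ?_⟩
      have hw3 : (w^3) ((4:ZMod 6), s) = (1, -s) := by
        rw [perm_pow3_apply, hwd, xy236_4, xy236_3, xy236_2]
      rw [Equiv.Perm.mul_apply, hw3, hud, u236_pow]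
      exact Prod.ext rfl (hvalm s)
    · refine ⟨u^(s.val) * w^4, mul_mem (pow_mem humem _) (pow_mem hwmem _), ?_⟩
      have hw4 : (w^4) ((5:ZMod 6), s) = (1, -s) := by
        rw [perm_pow4_apply, hwd, xy236_5, xy236_4, xy236_3, xy236_2]
      rw [Equiv.Perm.mul_apply, hw4, hud, u236_pow]
      exact Prod.ext rfl (hvalm s)
  have htrans := trans_of_reach x y _ reach
  have hfix : u ((0 : ZMod 6), (0 : ZMod r)) = ((0 : ZMod 6), (0 : ZMod r)) := by
    rw [hud, u236_0]
  have hne : u ((1 : ZMod 6), (0 : ZMod r)) ≠ ((1 : ZMod 6), (0 : ZMod r)) := by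
    rw [hud, u236_1]
    intro hcontra
    rw [Prod.ext_iff] at hcontra
    have h2 := hcontra.2
    simp only [add_zero] at h2
    exact one_ne_zero h2
  have hcard0 := nonregular_card x y htrans _ humem _ _ hfix hne
  have hcardval : Fintype.card (ZMod 6 × ZMod r) = r * 6 := by
    rw [Fintype.card_prod, ZMod.card, ZMod.card]
    ring
  rw [hcardval] at hcard0
  exact DessinP_of_perms _
    (((Equiv.prodCongr (zmodFin 6) (zmodFin r)).trans (Equiv.prodComm _ _)).trans finProdFinEquiv)
    x y (x236_orbits r) (y236_orbits r)
    ((allOrbitsSize_inv_iff _ _).mpr (xy236_orbits r)) htrans hcard0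
end C236

lemma classify_sorted (n a b c p q r : ℕ) (hn : 0 < n)
    (ha : 0 < a) (hb : 0 < b) (hc : 0 < c)
    (hpa : n = p * a) (hqb : n = q * b) (hrc : n = r * c)
    (hgenus : p + q + r = n) (hab : a ≤ b) (hbc : b ≤ c) :
    (a = 3 ∧ b = 3 ∧ c = 3) ∨ (a = 2 ∧ b = 4 ∧ c = 4) ∨ (a = 2 ∧ b = 3 ∧ c = 6) := by
  have key : n * (b*c + a*c + a*b) = n * (a*b*c) := by
    calc n * (b*c + a*c + a*b)
        = (p*a)*(b*c) + (q*b)*(a*c) + (r*c)*(a*b) := by rw [← hpa, ← hqb, ← hrc]; ring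
      _ = (p+q+r) * (a*b*c) := by ring
      _ = n * (a*b*c) := by rw [hgenus]
  have habc : b*c + a*c + a*b = a*b*c := Nat.eq_of_mul_eq_mul_left hn key
  have ha2 : 2 ≤ a := by
    by_contra h
    have ha1 : a = 1 := by omega
    subst ha1
    simp only [one_mul] at habc
    have : c + b = 0 := by linarith
    omega
  have ha3 : a ≤ 3 := by
    by_contra h
    have h4a : 4 ≤ a := by omega
    have h4b : 4 ≤ b := by omega
    have h4c : 4 ≤ c := by omega
    have k1 : 4 * (b*c) ≤ a * (b*c) := Nat.mul_le_mul_right _ h4a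
    have k2 : 4 * (a*c) ≤ b * (a*c) := Nat.mul_le_mul_right _ h4b
    have k3 : 4 * (a*b) ≤ c * (a*b) := Nat.mul_le_mul_right _ h4c
    have habc' : b * (a*c) = a*b*c := by ring
    have habc'' : c * (a*b) = a*b*c := by ring
    have habc''' : a * (b*c) = a*b*c := by ring
    rw [habc'''] at k1
    rw [habc'] at k2
    rw [habc''] at k3
    have hpos : 0 < a*b*c := by positivity
    linarith
  interval_cases a
  · -- a = 2
    have e1 : b * c = 2*c + 2*b := by nlinarith [habc]
    have hb2 : 2 ≤ b := hab
    have hb4 : b ≤ 4 := by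
      by_contra h
      have h5 : 5 ≤ b := by omega
      have : 5 * c ≤ b * c := Nat.mul_le_mul_right _ h5
      have h2b : 2*b ≤ 2*c := by omega
      linarith
    interval_cases b
    · right; left; omega
    · right; right; omega
    · right; left; omega
  · -- a = 3
    have e1 : 2 * (b * c) = 3*b + 3*c := by nlinarith [habc]
    have hb3 : 3 ≤ b := hab
    have hb3' : b ≤ 3 := by
      by_contra h
      have h4 : 4 ≤ b := by omega
      have : 4 * c ≤ b * c := Nat.mul_le_mul_right _ h4
      have h2b : 3*b ≤ 3*c := by omega
      linarith
    have hbeq : b = 3 := by omega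
    subst hbeq
    left
    refine ⟨rfl, rfl, by omega⟩

lemma main_sorted (n a b c p q r : ℕ) (hn : 0 < n)
    (ha : 0 < a) (hb : 0 < b) (hc : 0 < c) (hp : 0 < p) (hq : 0 < q) (hr : 0 < r)
    (hpa : n = p * a) (hqb : n = q * b) (hrc : n = r * c)
    (hgenus : p + q + r = n) (hab : a ≤ b) (hbc : b ≤ c) :
    (a < n ∧ b < n ∧ c < n) ↔ DessinP n a b c := by
  have hclass := classify_sorted n a b c p q r hn ha hb hc hpa hqb hrc hgenus hab hbc
  constructor
  · rintro ⟨h1, h2, h3⟩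
    rcases hclass with ⟨rfl, rfl, rfl⟩ | ⟨rfl, rfl, rfl⟩ | ⟨rfl, rfl, rfl⟩
    · have hp2 : 2 ≤ p := by omega
      rw [hpa]
      exact C333 p hp2
    · have hq2 : 2 ≤ q := by omega
      rw [hqb]
      exact C244 q hq2
    · have hr2 : 2 ≤ r := by omega
      rw [hrc]
      exact C236 r hr2
  · intro hD
    have hcn : c ≤ n := by
      rw [hrc]
      exact Nat.le_mul_of_pos_left c hr
    have hcltn : c < n := by
      rcases Nat.lt_or_ge c n with h | h
      · exact h
      · exfalso
        have hceq : c = n := by omega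
        rcases hclass with ⟨rfl, rfl, rfl⟩ | ⟨rfl, rfl, rfl⟩ | ⟨rfl, rfl, rfl⟩
        · subst hceq; exact N333 hD
        · rw [← hceq] at hD
          exact N424 (DessinP_cyc (DessinP_cyc hD))
        · rw [← hceq] at hD
          exact N623 (DessinP_cyc (DessinP_cyc hD))
    exact ⟨by omega, by omega, hcltn⟩

variable {n a b c : ℕ}
lemma DessinP_perm_bac (h : DessinP n a b c) : DessinP n b a c := DessinP_swap h
lemma DessinP_perm_acb (h : DessinP n a b c) : DessinP n a c b :=
  DessinP_swap (DessinP_cyc (DessinP_cyc h))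
lemma DessinP_perm_cab (h : DessinP n a b c) : DessinP n c a b :=
  DessinP_cyc (DessinP_cyc h)
lemma DessinP_perm_bca (h : DessinP n a b c) : DessinP n b c a := DessinP_cyc h
lemma DessinP_perm_cba (h : DessinP n a b c) : DessinP n c b a :=
  DessinP_swap (DessinP_cyc h)

theorem genus_one_nonregular_iff' (n a b c p q r : ℕ) (hn : 0 < n)
    (ha : 0 < a) (hb : 0 < b) (hc : 0 < c) (hp : 0 < p) (hq : 0 < q) (hr : 0 < r)
    (hpa : n = p * a) (hqb : n = q * b) (hrc : n = r * c)
    (hgenus : p + q + r = n) :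
    (a < n ∧ b < n ∧ c < n) ↔ DessinP n a b c := by
  rcases le_total a b with hab | hab
  · rcases le_total b c with hbc | hbc
    · exact main_sorted n a b c p q r hn ha hb hc hp hq hr hpa hqb hrc hgenus hab hbc
    · rcases le_total a c with hac | hac
      · have H := main_sorted n a c b p r q hn ha hc hb hp hr hq hpa hrc hqb (by omega) hac hbc
        constructor
        · intro h
          exact DessinP_perm_acb (H.mp ⟨h.1, h.2.2, h.2.1⟩)
        · intro h
          have := H.mpr (DessinP_perm_acb h)
          tauto
      · have H := main_sorted n c a b r p q hn hc ha hb hr hp hq hrc hpa hqb (by omega) hac hab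
        constructor
        · intro h
          exact DessinP_perm_bca (H.mp ⟨h.2.2, h.1, h.2.1⟩)
        · intro h
          have := H.mpr (DessinP_perm_cab h)
          tauto
  · rcases le_total a c with hac | hac
    · have H := main_sorted n b a c q p r hn hb ha hc hq hp hr hqb hpa hrc (by omega) hab hac
      constructor
      · intro h
        exact DessinP_perm_bac (H.mp ⟨h.2.1, h.1, h.2.2⟩)
      · intro h
        have := H.mpr (DessinP_perm_bac h)
        tauto
    · rcases le_total b c with hbc | hbc
      · have H := main_sorted n b c a q r p hn hb hc ha hq hr hp hqb hrc hpa (by omega) hbc hac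
        constructor
        · intro h
          exact DessinP_perm_cab (H.mp ⟨h.2.1, h.2.2, h.1⟩)
        · intro h
          have := H.mpr (DessinP_perm_bca h)
          tauto
      · have H := main_sorted n c b a r q p hn hc hb ha hr hq hp hrc hqb hpa (by omega) hbc hab
        constructor
        · intro h
          exact DessinP_perm_cba (H.mp ⟨h.2.2, h.2.1, h.1⟩)
        · intro h
          have := H.mpr (DessinP_perm_cba h)
          tauto

end Aux

/-- A uniform passport of genus 1 admits a non-regular dessin iff it contains no
part of type `n^1`. -/
theorem genus_one_nonregular_iff (n a b c p q r : ℕ) (hn : 0 < n)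
    (ha : 0 < a) (hb : 0 < b) (hc : 0 < c) (hp : 0 < p) (hq : 0 < q) (hr : 0 < r)
    (hpa : n = p * a) (hqb : n = q * b) (hrc : n = r * c)
    (hgenus : p + q + r = n) :
    (a < n ∧ b < n ∧ c < n) ↔
      ∃ x y : Equiv.Perm (Fin n),
        allOrbitsSize x a ∧ allOrbitsSize y b ∧ allOrbitsSize (x * y)⁻¹ c ∧
        (∀ e f : Fin n,
          ∃ g ∈ Subgroup.closure ({x, y} : Set (Equiv.Perm (Fin n))), g e = f) ∧
        Nat.card (Subgroup.closure ({x, y} : Set (Equiv.Perm (Fin n)))) ≠ n :=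
  genus_one_nonregular_iff' n a b c p q r hn ha hb hc hp hq hr hpa hqb hrc hgenus
end

section
/- Let E be a finite type whose cardinality n is not a prime number, and let G be a subgroup of Equiv.Perm E whose natural action on E is primitive, i.e. transitive and admitting no nontrivial blocks. Then every permutation of E that commutes with all elements of G is the identity; equivalently, the centralizer of G in Equiv.Perm E is the trivial subgroup. (In particular, a dessin d'enfant whose number of edges is not prime and whose monodromy group is primitive has a trivial automorphism group.) -/
/-- If the cardinality of `E` is not prime and `G ≤ Equiv.Perm E` is primitive
(transitive with no nontrivial blocks), then the centralizer of `G` in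
`Equiv.Perm E` is trivial. -/
theorem primitive_trivial_centralizer {E : Type*} [Fintype E]
    (hnp : ¬ (Fintype.card E).Prime)
    (G : Subgroup (Equiv.Perm E))
    (htrans : ∀ e f : E, ∃ g ∈ G, g e = f)
    (hprim : ∀ B : Set E,
      (∀ g ∈ G, (⇑g) '' B = B ∨ Disjoint ((⇑g) '' B) B) →
      B.Nonempty → (∃ e, B = {e}) ∨ B = Set.univ) :
    ∀ c : Equiv.Perm E, (∀ g ∈ G, c * g = g * c) → c = 1 := by
  intro c hc
  rcases isEmpty_or_nonempty E with hE | hE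
  · exact Equiv.ext fun x => (IsEmpty.false x).elim
  obtain ⟨e⟩ := hE
  have hne : Nonempty E := ⟨e⟩
  -- a commuting permutation with a fixed point is the identity
  have fixA : ∀ h : Equiv.Perm E, (∀ g ∈ G, h * g = g * h) → (∃ x, h x = x) → h = 1 := by
    rintro h hh ⟨x, hx⟩
    ext y
    obtain ⟨g, hg, hgx⟩ := htrans x y
    have := congrArg (fun p : Equiv.Perm E => p x) (hh g hg)
    simp only [Equiv.Perm.mul_apply, hx] at this
    simp [← hgx, this, hx]
  -- orbits of a commuting permutation are blocks; dichotomy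
  have hblock : ∀ h : Equiv.Perm E, (∀ g ∈ G, h * g = g * h) → ∀ x : E,
      (∃ f, Set.range (fun k : ℤ => (h ^ k) x) = {f}) ∨
        Set.range (fun k : ℤ => (h ^ k) x) = Set.univ := by
    intro h hh x
    have happ : ∀ (k : ℤ) (g : Equiv.Perm E), g ∈ G → ∀ y, g ((h ^ k) y) = (h ^ k) (g y) := by
      intro k g hg y
      have hC : Commute h g := hh g hg
      have hcomm : g * h ^ k = h ^ k * g := (hC.symm.zpow_right k).eq
      calc g ((h ^ k) y) = (g * h ^ k) y := rfl
        _ = (h ^ k * g) y := by rw [hcomm]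
        _ = (h ^ k) (g y) := rfl
    apply hprim
    · intro g hg
      have himg : (⇑g) '' Set.range (fun k : ℤ => (h ^ k) x)
          = Set.range (fun k : ℤ => (h ^ k) (g x)) := by
        rw [← Set.range_comp]
        exact congrArg _ (funext fun k => happ k g hg x)
      rw [himg]
      by_cases hdis : Disjoint (Set.range (fun k : ℤ => (h ^ k) (g x)))
          (Set.range (fun k : ℤ => (h ^ k) x))
      · exact Or.inr hdis
      · left
        rw [Set.not_disjoint_iff] at hdis
        obtain ⟨y, ⟨j, hj⟩, ⟨k, hk⟩⟩ := hdis
        have hj' : (h ^ j) (g x) = y := hj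
        have hk' : (h ^ k) x = y := hk
        have hgx : g x = (h ^ (k - j)) x := by
          have h1 : (h ^ j)⁻¹ ((h ^ j) (g x)) = (h ^ j)⁻¹ ((h ^ k) x) := by
            rw [hj', hk']
          rw [← Equiv.Perm.mul_apply, inv_mul_cancel, Equiv.Perm.one_apply] at h1
          rw [h1, ← zpow_neg, ← Equiv.Perm.mul_apply, ← zpow_add]
          ring_nf
        ext z
        constructor
        · rintro ⟨m, rfl⟩
          refine ⟨m + (k - j), ?_⟩
          show (h ^ (m + (k - j))) x = (h ^ m) (g x)
          rw [hgx, ← Equiv.Perm.mul_apply, ← zpow_add]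
        · rintro ⟨m, rfl⟩
          refine ⟨m - (k - j), ?_⟩
          show (h ^ (m - (k - j))) (g x) = (h ^ m) x
          rw [hgx, ← Equiv.Perm.mul_apply, ← zpow_add]
          ring_nf
    · exact ⟨x, 0, by simp⟩
  -- key dichotomy: commuting permutation is 1 or has order = card E
  have key : ∀ h : Equiv.Perm E, (∀ g ∈ G, h * g = g * h) →
      h = 1 ∨ orderOf h = Fintype.card E := by
    intro h hh
    have hpowcomm : ∀ m : ℕ, ∀ g ∈ G, h ^ m * g = g * h ^ m := by
      intro m g hg
      have hC : Commute h g := hh g hg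
      exact (hC.pow_left m).eq
    rcases hblock h hh e with ⟨f, hf⟩ | huniv
    · left
      apply fixA h hh
      have h0 : e ∈ Set.range (fun k : ℤ => (h ^ k) e) := ⟨0, by simp⟩
      have h1 : h e ∈ Set.range (fun k : ℤ => (h ^ k) e) := ⟨1, by simp⟩
      rw [hf, Set.mem_singleton_iff] at h0 h1
      exact ⟨e, by rw [h1, ← h0]⟩
    · right
      have hmpos : 0 < orderOf h := orderOf_pos h
      have haux : ∀ i j : Fin (orderOf h), (i : ℕ) ≤ (j : ℕ) →
          (h ^ (i : ℕ)) e = (h ^ (j : ℕ)) e → i = j := by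
        intro i j hle hij
        have hpow : (h ^ ((j : ℕ) - (i : ℕ))) e = e := by
          have h2 : (h ^ (i : ℕ)) ((h ^ ((j : ℕ) - (i : ℕ))) e) = (h ^ (i : ℕ)) e := by
            rw [← Equiv.Perm.mul_apply, ← pow_add, Nat.add_sub_cancel' hle, hij]
          exact (h ^ (i : ℕ)).injective h2
        have hone := fixA _ (hpowcomm ((j : ℕ) - (i : ℕ))) ⟨e, hpow⟩
        have hdvd : orderOf h ∣ (j : ℕ) - (i : ℕ) := orderOf_dvd_of_pow_eq_one hone
        have hz : (j : ℕ) - (i : ℕ) = 0 :=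
          Nat.eq_zero_of_dvd_of_lt hdvd (lt_of_le_of_lt (Nat.sub_le _ _) j.isLt)
        apply Fin.ext
        omega
      have hinj : Function.Injective (fun k : Fin (orderOf h) => (h ^ (k : ℕ)) e) := by
        intro i j hij
        simp only at hij
        rcases le_total (i : ℕ) (j : ℕ) with hle | hle
        · exact haux i j hle hij
        · exact (haux j i hle hij.symm).symm
      have hle : orderOf h ≤ Fintype.card E := by
        simpa using Fintype.card_le_of_injective _ hinj
      have hsurj : Function.Surjective (fun k : Fin (orderOf h) => (h ^ (k : ℕ)) e) := by
        intro x
        have hx : x ∈ Set.range (fun k : ℤ => (h ^ k) e) := huniv ▸ Set.mem_univ x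
        obtain ⟨k, hk⟩ := hx
        have hk' : (h ^ k) e = x := hk
        have hmz : (0 : ℤ) < (orderOf h : ℤ) := by exact_mod_cast hmpos
        refine ⟨⟨(k % (orderOf h : ℤ)).toNat, ?_⟩, ?_⟩
        · have := Int.emod_lt_of_pos k hmz
          omega
        · have hnn : (0 : ℤ) ≤ k % (orderOf h : ℤ) := Int.emod_nonneg k (by omega)
          have hzp : h ^ (k % (orderOf h : ℤ)) = h ^ k := by
            conv_rhs => rw [← Int.emod_add_mul_ediv k (orderOf h : ℤ)]
            rw [zpow_add, zpow_mul, zpow_natCast, pow_orderOf_eq_one, one_zpow, mul_one]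
          show (h ^ ((k % (orderOf h : ℤ)).toNat : ℕ)) e = x
          rw [← zpow_natCast, Int.toNat_of_nonneg hnn, hzp]
          exact hk'
      have hge : Fintype.card E ≤ orderOf h := by
        simpa using Fintype.card_le_of_surjective _ hsurj
      omega
  rcases key c hc with h1 | hn
  · exact h1
  · set n := Fintype.card E with hndef
    have hn1 : 1 ≤ n := Fintype.card_pos
    rcases Nat.lt_or_ge n 2 with h2 | h2
    · have hss : Subsingleton E := Fintype.card_le_one_iff_subsingleton.mp (by omega)
      exact Equiv.ext fun x => Subsingleton.elim _ _
    obtain ⟨d, hdn, hd2, hdlt⟩ := Nat.exists_dvd_of_not_prime2 h2 hnp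
    have hcd : ∀ g ∈ G, c ^ d * g = g * c ^ d := by
      intro g hg
      have hC : Commute c g := hc g hg
      exact (hC.pow_left d).eq
    rcases key (c ^ d) hcd with h1 | hodd
    · exfalso
      have hdv : orderOf c ∣ d := orderOf_dvd_of_pow_eq_one h1
      rw [hn] at hdv
      exact absurd (Nat.le_of_dvd (by omega) hdv) (by omega)
    · exfalso
      have heq : orderOf (c ^ d) = n / d := by
        rw [orderOf_pow_of_dvd (by omega) (hn ▸ hdn), hn]
      rw [heq] at hodd
      have : n / d < n := Nat.div_lt_self (by omega) hd2
      omega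
end

section
/- For every odd integer n ≥ 5 (so that the passport [n, n, n] has integer genus (n−1)/2 ≥ 2), there exist permutations x, y of Fin n such that x, y, and x*y are all n-cycles and the only permutation of Fin n commuting with both x and y is the identity. (Every passport [n, n, n] of genus at least 2 admits a dessin with a trivial automorphism group.) -/
set_option maxHeartbeats 4000000

namespace PassportAux

variable {n : ℕ}

lemma mk_add_mk {a b : ℕ} (ha : a < n) (hb : b < n) (hab : a + b < n) :
    (⟨a, ha⟩ : Fin n) + ⟨b, hb⟩ = ⟨a + b, hab⟩ := by
  apply Fin.ext
  simp [Fin.add_def, Nat.mod_eq_of_lt hab]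

lemma mk_add_mk_wrap {a b c : ℕ} (ha : a < n) (hb : b < n) (hc : c < n) (h : a + b = n + c) :
    (⟨a, ha⟩ : Fin n) + ⟨b, hb⟩ = ⟨c, hc⟩ := by
  apply Fin.ext
  simp only [Fin.add_def]
  rw [h, Nat.add_mod_left, Nat.mod_eq_of_lt hc]

/-- If every element is reachable from the base point, all orbits have size `n`. -/
lemma allOrbits_of_reach (h0 : 0 < n) (σ : Equiv.Perm (Fin n))
    (h : ∀ f : Fin n, ∃ k : ℤ, (σ ^ k) ⟨0, h0⟩ = f) :
    allOrbitsSize σ n := by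
  intro e
  have huniv : permOrbit σ e = Set.univ := by
    ext f
    simp only [permOrbit, Set.mem_setOf_eq, Set.mem_univ, iff_true]
    obtain ⟨k, hk⟩ := h e
    obtain ⟨m, hm⟩ := h f
    refine ⟨m - k, ?_⟩
    rw [← hk, ← Equiv.Perm.mul_apply, ← zpow_add, sub_add_cancel, hm]
  rw [huniv, Set.ncard_univ, Nat.card_eq_fintype_card, Fintype.card_fin]

lemma reach_step (h0 : 0 < n) (σ : Equiv.Perm (Fin n)) {f : Fin n}
    (hf : ∃ k : ℤ, (σ ^ k) ⟨0, h0⟩ = f) : ∃ k : ℤ, (σ ^ k) ⟨0, h0⟩ = σ f := by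
  obtain ⟨k, hk⟩ := hf
  exact ⟨1 + k, by rw [zpow_add, zpow_one, Equiv.Perm.mul_apply, hk]⟩

end PassportAux

open PassportAux in
/-- Every passport `[n, n, n]` of genus at least 2 (i.e. `n` odd, `n ≥ 5`) admits
a dessin with a trivial automorphism group. -/
theorem passport_nnn_trivial_aut (n : ℕ) (hodd : Odd n) (hn : 5 ≤ n) :
    ∃ x y : Equiv.Perm (Fin n),
      allOrbitsSize x n ∧ allOrbitsSize y n ∧ allOrbitsSize (x * y) n ∧
      ∀ c : Equiv.Perm (Fin n), c * x = x * c → c * y = y * c → c = 1 := by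
  have h0 : 0 < n := by omega
  haveI : NeZero n := ⟨by omega⟩
  have h1 : 1 < n := by omega
  have h2 : 2 < n := by omega
  have h3 : 3 < n := by omega
  have h4 : 4 < n := by omega
  set e0 : Fin n := ⟨0, h0⟩ with he0
  set e1 : Fin n := ⟨1, h1⟩ with he1
  set e3 : Fin n := ⟨3, h3⟩ with he3
  have ne01 : e0 ≠ e1 := by simp [he0, he1, Fin.ext_iff]
  have ne03 : e0 ≠ e3 := by simp [he0, he3, Fin.ext_iff]
  have ne13 : e1 ≠ e3 := by simp [he1, he3, Fin.ext_iff]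
  set x : Equiv.Perm (Fin n) := Equiv.addLeft e1 with hx
  set t : Equiv.Perm (Fin n) := Equiv.swap e0 e1 * Equiv.swap e1 e3 with ht
  set y : Equiv.Perm (Fin n) := x * t with hy
  have hxapp : ∀ i : Fin n, x i = e1 + i := fun i => rfl
  -- values of t
  have ht0 : t e0 = e1 := by
    rw [ht, Equiv.Perm.mul_apply, Equiv.swap_apply_of_ne_of_ne ne01 ne03,
      Equiv.swap_apply_left]
  have ht1 : t e1 = e3 := by
    rw [ht, Equiv.Perm.mul_apply, Equiv.swap_apply_left,
      Equiv.swap_apply_of_ne_of_ne ne03.symm ne13.symm]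
  have ht3 : t e3 = e0 := by
    rw [ht, Equiv.Perm.mul_apply, Equiv.swap_apply_right, Equiv.swap_apply_right]
  have htfix : ∀ (m : ℕ) (hm : m < n), m ≠ 0 → m ≠ 1 → m ≠ 3 →
      t (⟨m, hm⟩ : Fin n) = ⟨m, hm⟩ := by
    intro m hm hm0 hm1 hm3
    have g1 : (⟨m, hm⟩ : Fin n) ≠ e1 := by simp [he1, Fin.ext_iff, hm1]
    have g0 : (⟨m, hm⟩ : Fin n) ≠ e0 := by simp [he0, Fin.ext_iff, hm0]
    have g3 : (⟨m, hm⟩ : Fin n) ≠ e3 := by simp [he3, Fin.ext_iff, hm3]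
    rw [ht, Equiv.Perm.mul_apply, Equiv.swap_apply_of_ne_of_ne g1 g3,
      Equiv.swap_apply_of_ne_of_ne g0 g1]
  have he00 : e0 = (0 : Fin n) := by apply Fin.ext; simp [he0]
  have addval : ∀ (a : ℕ) (ha : a < n) (ha' : a + 1 < n),
      e1 + (⟨a, ha⟩ : Fin n) = ⟨a + 1, ha'⟩ := by
    intro a ha ha'
    rw [he1, mk_add_mk h1 ha (by omega)]
    apply Fin.ext
    simp [Nat.add_comm]
  -- values of y
  have hyapp : ∀ i : Fin n, y i = e1 + t i := fun i => rfl
  have hy0 : y e0 = ⟨2, h2⟩ := by rw [hyapp, ht0, he1]; exact addval 1 h1 h2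
  have hy2 : y ⟨2, h2⟩ = e3 := by
    rw [hyapp, htfix 2 h2 (by omega) (by omega) (by omega), he3]
    exact addval 2 h2 h3
  have hy3 : y e3 = e1 := by
    rw [hyapp, ht3, he00]
    exact add_zero e1
  have hy1 : y e1 = ⟨4, h4⟩ := by rw [hyapp, ht1, he3]; exact addval 3 h3 h4
  have hyfix : ∀ (m : ℕ) (hm : m < n) (hm' : m + 1 < n), m ≠ 0 → m ≠ 1 → m ≠ 3 →
      y (⟨m, hm⟩ : Fin n) = ⟨m + 1, hm'⟩ := by
    intro m hm hm' q0 q1 q3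
    rw [hyapp, htfix m hm q0 q1 q3]
    exact addval m hm hm'
  have hn1 : n - 1 < n := by omega
  have hylast : y (⟨n - 1, hn1⟩ : Fin n) = e0 := by
    rw [hyapp, htfix (n-1) (by omega) (by omega) (by omega) (by omega), he1, he0]
    exact mk_add_mk_wrap h1 (by omega) h0 (by omega)
  -- values of z = x * y
  set z : Equiv.Perm (Fin n) := x * y with hz
  have hzapp : ∀ i : Fin n, z i = e1 + y i := fun i => rfl
  have hz0 : z e0 = e3 := by rw [hzapp, hy0, he3]; exact addval 2 h2 h3
  have hz3 : z e3 = ⟨2, h2⟩ := by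
    rw [hzapp, hy3]; exact addval 1 h1 h2
  have hz2 : z ⟨2, h2⟩ = ⟨4, h4⟩ := by rw [hzapp, hy2, he3]; exact addval 3 h3 h4
  have hzfix : ∀ (m : ℕ) (hm : m < n) (hm' : m + 2 < n), m ≠ 0 → m ≠ 1 → m ≠ 3 →
      z (⟨m, hm⟩ : Fin n) = ⟨m + 2, hm'⟩ := by
    intro m hm hm' q0 q1 q3
    rw [hzapp, hyfix m hm (by omega) q0 q1 q3]
    exact addval (m+1) (by omega) (by omega)
  have hzlast : z (⟨n - 1, hn1⟩ : Fin n) = e1 := by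
    rw [hzapp, hylast, he00]
    exact add_zero e1
  refine ⟨x, y, ?_, ?_, ?_, ?_⟩
  · -- x is an n-cycle
    apply allOrbits_of_reach h0
    have chain : ∀ (m : ℕ) (hm : m < n), ∃ k : ℤ, (x ^ k) ⟨0, h0⟩ = ⟨m, hm⟩ := by
      intro m
      induction m with
      | zero => exact fun hm => ⟨0, by simp⟩
      | succ m ih =>
        intro hm
        have hx' : x (⟨m, by omega⟩ : Fin n) = ⟨m + 1, hm⟩ := by
          rw [hxapp]; exact addval m (by omega) hm
        have := reach_step h0 x (ih (by omega))
        rwa [hx'] at this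
    intro f
    obtain ⟨v, hv⟩ := f
    exact chain v hv
  · -- y is an n-cycle
    apply allOrbits_of_reach h0
    have r0 : ∃ k : ℤ, (y ^ k) ⟨0, h0⟩ = e0 := ⟨0, by simp [he0]⟩
    have r2 : ∃ k : ℤ, (y ^ k) ⟨0, h0⟩ = ⟨2, h2⟩ := by
      have := reach_step h0 y r0; rwa [hy0] at this
    have r3 : ∃ k : ℤ, (y ^ k) ⟨0, h0⟩ = e3 := by
      have := reach_step h0 y r2; rwa [hy2] at this
    have r1 : ∃ k : ℤ, (y ^ k) ⟨0, h0⟩ = e1 := by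
      have := reach_step h0 y r3; rwa [hy3] at this
    have r4 : ∃ k : ℤ, (y ^ k) ⟨0, h0⟩ = ⟨4, h4⟩ := by
      have := reach_step h0 y r1; rwa [hy1] at this
    have chain : ∀ (j : ℕ) (hj : 4 + j < n), ∃ k : ℤ, (y ^ k) ⟨0, h0⟩ = ⟨4 + j, hj⟩ := by
      intro j
      induction j with
      | zero => intro hj; exact r4
      | succ j ih =>
        intro hj
        have := reach_step h0 y (ih (by omega))
        rwa [hyfix (4 + j) (by omega) (by omega) (by omega) (by omega) (by omega)] at this
    intro f
    obtain ⟨v, hv⟩ := f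
    rcases Nat.lt_or_ge v 4 with h | h
    · interval_cases v
      · exact r0
      · exact r1
      · exact r2
      · exact r3
    · obtain ⟨j, rfl⟩ : ∃ j, v = 4 + j := ⟨v - 4, by omega⟩
      exact chain j hv
  · -- z = x * y is an n-cycle
    apply allOrbits_of_reach h0
    have r0 : ∃ k : ℤ, (z ^ k) ⟨0, h0⟩ = e0 := ⟨0, by simp [he0]⟩
    have r3 : ∃ k : ℤ, (z ^ k) ⟨0, h0⟩ = e3 := by
      have := reach_step h0 z r0; rwa [hz0] at this
    have r2 : ∃ k : ℤ, (z ^ k) ⟨0, h0⟩ = ⟨2, h2⟩ := by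
      have := reach_step h0 z r3; rwa [hz3] at this
    have r4 : ∃ k : ℤ, (z ^ k) ⟨0, h0⟩ = ⟨4, h4⟩ := by
      have := reach_step h0 z r2; rwa [hz2] at this
    -- even chain
    have even_chain : ∀ (j : ℕ) (hj : 4 + 2*j < n), ∃ k : ℤ, (z ^ k) ⟨0, h0⟩ = ⟨4 + 2*j, hj⟩ := by
      intro j
      induction j with
      | zero => intro hj; exact r4
      | succ j ih =>
        intro hj
        have h' : 4 + 2*j + 2 < n := by omega
        have this1 := reach_step h0 z (ih (by omega))
        rw [hzfix (4 + 2*j) (by omega) h' (by omega) (by omega) (by omega)] at this1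
        have e : (⟨4 + 2*j + 2, h'⟩ : Fin n) = ⟨4 + 2*(j+1), hj⟩ := by
          simp only [Fin.mk.injEq]; omega
        rwa [e] at this1
    have rlast : ∃ k : ℤ, (z ^ k) ⟨0, h0⟩ = ⟨n - 1, hn1⟩ := by
      obtain ⟨j, hj⟩ : ∃ j, n - 1 = 4 + 2*j := by
        obtain ⟨m, hm⟩ := hodd; exact ⟨m - 2, by omega⟩
      have h' : 4 + 2*j < n := by omega
      have this1 := even_chain j h'
      have e : (⟨4 + 2*j, h'⟩ : Fin n) = ⟨n - 1, hn1⟩ := by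
        simp only [Fin.mk.injEq]; omega
      rwa [e] at this1
    have r1 : ∃ k : ℤ, (z ^ k) ⟨0, h0⟩ = e1 := by
      have := reach_step h0 z rlast; rwa [hzlast] at this
    have r5 : ∀ (h5 : 5 < n), ∃ k : ℤ, (z ^ k) ⟨0, h0⟩ = ⟨5, h5⟩ := by
      intro h5
      have := reach_step h0 z r1
      rw [hzapp, hy1] at this
      rwa [addval 4 h4 h5] at this
    have odd_chain : ∀ (j : ℕ) (hj : 5 + 2*j < n), ∃ k : ℤ, (z ^ k) ⟨0, h0⟩ = ⟨5 + 2*j, hj⟩ := by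
      intro j
      induction j with
      | zero => intro hj; exact r5 (by omega)
      | succ j ih =>
        intro hj
        have h' : 5 + 2*j + 2 < n := by omega
        have this1 := reach_step h0 z (ih (by omega))
        rw [hzfix (5 + 2*j) (by omega) h' (by omega) (by omega) (by omega)] at this1
        have e : (⟨5 + 2*j + 2, h'⟩ : Fin n) = ⟨5 + 2*(j+1), hj⟩ := by
          simp only [Fin.mk.injEq]; omega
        rwa [e] at this1
    intro f
    obtain ⟨v, hv⟩ := f
    rcases Nat.even_or_odd v with he | ho
    · rcases Nat.lt_or_ge v 4 with h | h
      · interval_cases v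
        · exact r0
        · exact absurd he (by decide)
        · exact r2
        · exact absurd he (by decide)
      · obtain ⟨j, rfl⟩ : ∃ j, v = 4 + 2*j := by
          obtain ⟨m, hm⟩ := he; exact ⟨m - 2, by omega⟩
        exact even_chain j hv
    · rcases Nat.lt_or_ge v 5 with h | h
      · interval_cases v
        · exact absurd ho (by decide)
        · exact r1
        · exact absurd ho (by decide)
        · exact r3
        · exact absurd ho (by decide)
      · obtain ⟨j, rfl⟩ : ∃ j, v = 5 + 2*j := by
          obtain ⟨m, hm⟩ := ho; exact ⟨m - 2, by omega⟩
        exact odd_chain j hv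
  · -- trivial centralizer
    intro c hcx hcy
    set k : Fin n := c e0 with hk
    have claim : ∀ (m : ℕ) (hm : m < n), c ⟨m, hm⟩ = k + ⟨m, hm⟩ := by
      intro m
      induction m with
      | zero =>
        intro hm
        have h00 : (⟨0, hm⟩ : Fin n) = e0 := by rw [he0]
        rw [h00, ← hk, he00, add_zero]
      | succ m ih =>
        intro hm
        have hm' : m < n := by omega
        have hstep : (⟨m + 1, hm⟩ : Fin n) = e1 + ⟨m, hm'⟩ := (addval m hm' hm).symm
        have hcomm : c (x ⟨m, hm'⟩) = x (c ⟨m, hm'⟩) := by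
          have h' := DFunLike.congr_fun hcx (⟨m, hm'⟩ : Fin n)
          simpa [Equiv.Perm.mul_apply] using h'
        calc c ⟨m+1, hm⟩ = c (x ⟨m, hm'⟩) := by rw [hstep, hxapp]
          _ = x (c ⟨m, hm'⟩) := hcomm
          _ = e1 + (k + ⟨m, hm'⟩) := by rw [ih hm', hxapp]
          _ = k + (e1 + ⟨m, hm'⟩) := by rw [add_left_comm]
          _ = k + ⟨m+1, hm⟩ := by rw [← hstep]
    have claim' : ∀ i : Fin n, c i = k + i := by
      intro i
      have := claim i.val i.isLt
      simpa using this
    -- use commutation with y at e0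
    have key : k + ⟨2, h2⟩ = y k := by
      have hcomm : c (y e0) = y (c e0) := by
        have h' := DFunLike.congr_fun hcy e0
        simpa [Equiv.Perm.mul_apply] using h'
      rw [hy0, claim' ⟨2, h2⟩, ← hk] at hcomm
      exact hcomm
    have kval := k.isLt
    by_cases q0 : k.val = 0
    · -- k = 0, so c = 1
      have hk0 : k = e0 := by rw [he0]; exact Fin.ext q0
      apply Equiv.ext
      intro i
      rw [claim' i, hk0, he00, zero_add]
      rfl
    · exfalso
      by_cases q1 : k.val = 1
      · have hk1 : k = e1 := by rw [he1]; exact Fin.ext q1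
        rw [hk1, hy1, addval 2 h2 h3] at key
        have := congrArg Fin.val key
        simp at this
      · by_cases q3 : k.val = 3
        · have hk3 : k = e3 := by rw [he3]; exact Fin.ext q3
          rw [hk3, hy3, he3, he1] at key
          have := congrArg Fin.val key
          simp [Fin.add_def] at this
          rcases Nat.lt_or_ge 5 n with h | h
          · rw [Nat.mod_eq_of_lt h] at this; omega
          · have hn5 : n = 5 := by omega
            rw [hn5] at this; omega
        · -- generic k: t fixes k, contradiction
          have htk : t k = k := by
            have := htfix k.val kval q0 q1 q3
            simpa using this
          rw [hyapp, htk] at key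
          have : (⟨2, h2⟩ : Fin n) = e1 := by
            have h' : k + ⟨2, h2⟩ = k + e1 := by rw [key, add_comm]
            exact add_left_cancel h'
          rw [he1] at this
          have := congrArg Fin.val this
          simp at this
end

section
/- For all positive integers q and m, the inequality ∑_{j=0}^{⌊m/2⌋} (2^{2q/m − 1})^j / ((m − 2j)! · j!) ≤ 2^q · m^{−m/2} · Real.exp (m/2 + 2^{−q/m} · Real.sqrt m) holds in ℝ, where the factorials are cast to ℝ and the powers 2^{2q/m − 1}, 2^{−q/m}, and m^{−m/2} are real powers with real exponents. -/
/-- Bound for the coefficient `∑_{j≤⌊m/2⌋} α^j/((m−2j)!·j!)` (with `α = 2^{2q/m−1}`)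
of `x^m` in `exp(x + αx²)`, used in the clean case `b = 2`. -/
theorem coeff_exp_bound (q m : ℕ) (hq : 0 < q) (hm : 0 < m) :
    ∑ j ∈ Finset.range (m / 2 + 1),
      ((2 : ℝ) ^ (2 * (q : ℝ) / (m : ℝ) - 1)) ^ j /
        (((m - 2 * j).factorial : ℝ) * ((j.factorial : ℝ)))
    ≤ (2 : ℝ) ^ q * (m : ℝ) ^ (-((m : ℝ) / 2)) *
        Real.exp ((m : ℝ) / 2 + (2 : ℝ) ^ (-((q : ℝ) / (m : ℝ))) * Real.sqrt m) := by
  have hm0 : (0:ℝ) < m := by exact_mod_cast hm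
  have hmne : (m:ℝ) ≠ 0 := hm0.ne'
  set A : ℝ := (2:ℝ) ^ (2 * (q:ℝ) / (m:ℝ) - 1) with hA
  set R : ℝ := (2:ℝ) ^ (-((q:ℝ)/(m:ℝ))) * Real.sqrt m with hR
  have hApos : 0 < A := Real.rpow_pos_of_pos two_pos _
  have hRpos : 0 < R := mul_pos (Real.rpow_pos_of_pos two_pos _) (Real.sqrt_pos.2 hm0)
  have hAR2 : A * R ^ 2 = m / 2 := by
    rw [hA, hR, mul_pow, Real.sq_sqrt hm0.le,
      ← Real.rpow_natCast ((2:ℝ) ^ (-((q:ℝ)/(m:ℝ)))) 2,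
      ← Real.rpow_mul (by norm_num), ← mul_assoc, ← Real.rpow_add two_pos]
    have h1 : 2 * (q:ℝ)/(m:ℝ) - 1 + -((q:ℝ)/(m:ℝ)) * ((2:ℕ):ℝ) = -1 := by
      push_cast; field_simp; ring
    rw [h1, Real.rpow_neg_one]
    ring
  have hRm : R ^ m = ((2:ℝ)^q)⁻¹ * (m:ℝ) ^ ((m:ℝ)/2) := by
    rw [hR, mul_pow, Real.sqrt_eq_rpow,
      ← Real.rpow_natCast ((2:ℝ) ^ (-((q:ℝ)/(m:ℝ)))) m,
      ← Real.rpow_natCast ((m:ℝ) ^ ((1:ℝ)/2)) m,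
      ← Real.rpow_mul (by norm_num), ← Real.rpow_mul hm0.le]
    congr 1
    · rw [neg_mul, div_mul_cancel₀ _ hmne, Real.rpow_neg (by norm_num), Real.rpow_natCast]
    · congr 1; ring
  set S : ℝ := R + A * R ^ 2 with hS
  have hSpos : 0 < S := by positivity
  have key : (∑ j ∈ Finset.range (m/2+1),
      A ^ j / (((m - 2*j).factorial : ℝ) * (j.factorial : ℝ))) * R ^ m
      ≤ Real.exp S := by
    rw [Finset.sum_mul]
    have step1 : ∀ j ∈ Finset.range (m/2+1),
        A ^ j / (((m - 2*j).factorial : ℝ) * (j.factorial : ℝ)) * R ^ m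
        ≤ S ^ (m - j) / ((m - j).factorial : ℝ) := by
      intro j hj
      rw [Finset.mem_range] at hj
      have h2j : 2 * j ≤ m := by omega
      have hjm : j ≤ m - j := by omega
      have hfact : ((m - j).factorial : ℝ)
          = ((m-j).choose j : ℝ) * (j.factorial : ℝ) * ((m - 2*j).factorial : ℝ) := by
        have h := Nat.choose_mul_factorial_mul_factorial hjm
        rw [show m - j - j = m - 2*j by omega] at h
        exact_mod_cast h.symm
      have hnum : A ^ j * R ^ m * ((m-j).choose j : ℝ) ≤ S ^ (m - j) := by
        have hterm : R ^ (m - 2*j) * (A * R^2) ^ ((m - j) - (m - 2*j)) *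
            ((m-j).choose (m - 2*j) : ℝ) ≤ S ^ (m - j) := by
          rw [hS, add_pow R (A * R^2) (m - j)]
          refine Finset.single_le_sum
            (f := fun k => R ^ k * (A * R^2) ^ ((m - j) - k) * ((m-j).choose k : ℝ))
            (fun i _ => by positivity) ?_
          rw [Finset.mem_range]; omega
        rw [show (m - j) - (m - 2*j) = j by omega] at hterm
        have e1 : (A * R^2) ^ j = A ^ j * R ^ (2*j) := by
          rw [mul_pow A (R^2) j, ← pow_mul R 2 j]
        have e2 : R ^ m = R ^ (m - 2*j) * R ^ (2*j) := by
          rw [← pow_add R (m - 2*j) (2*j)]; congr 1; omega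
        have e3 : (m-j).choose (m - 2*j) = (m-j).choose j := by
          rw [← Nat.choose_symm hjm, show m - j - j = m - 2*j by omega]
        calc A ^ j * R ^ m * ((m-j).choose j : ℝ)
            = R ^ (m - 2*j) * (A * R^2) ^ j * ((m-j).choose (m - 2*j) : ℝ) := by
              rw [e1, e2, e3]; ring
          _ ≤ S ^ (m - j) := hterm
      rw [div_mul_eq_mul_div, div_le_div_iff₀ (by positivity) (by positivity)]
      calc A ^ j * R ^ m * ((m - j).factorial : ℝ)
          = (A ^ j * R ^ m * ((m-j).choose j : ℝ)) *
              ((j.factorial : ℝ) * ((m - 2*j).factorial : ℝ)) := by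
            rw [hfact]; ring
        _ ≤ S ^ (m - j) * ((j.factorial : ℝ) * ((m - 2*j).factorial : ℝ)) :=
            mul_le_mul_of_nonneg_right hnum (by positivity)
        _ = S ^ (m - j) * (((m - 2*j).factorial : ℝ) * (j.factorial : ℝ)) := by ring
    calc ∑ j ∈ Finset.range (m/2+1),
          A ^ j / (((m - 2*j).factorial : ℝ) * (j.factorial : ℝ)) * R ^ m
        ≤ ∑ j ∈ Finset.range (m/2+1), S ^ (m - j) / ((m - j).factorial : ℝ) :=
          Finset.sum_le_sum step1
      _ = ∑ i ∈ (Finset.range (m/2+1)).image (m - ·),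
            S ^ i / (i.factorial : ℝ) := by
          rw [Finset.sum_image]
          intro a ha b hb hab
          rw [Finset.mem_coe, Finset.mem_range] at ha hb
          simp only at hab
          omega
      _ ≤ ∑ i ∈ Finset.range (m+1), S ^ i / (i.factorial : ℝ) := by
          apply Finset.sum_le_sum_of_subset_of_nonneg
          · intro i hi
            simp only [Finset.mem_image, Finset.mem_range] at hi ⊢
            obtain ⟨a, ha, rfl⟩ := hi
            omega
          · intro i _ _; positivity
      _ ≤ Real.exp S := Real.sum_le_exp_of_nonneg hSpos.le _
  have hRmpos : 0 < R ^ m := pow_pos hRpos m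
  have key2 : (∑ j ∈ Finset.range (m/2+1),
      A ^ j / (((m - 2*j).factorial : ℝ) * (j.factorial : ℝ)))
      ≤ Real.exp S / R ^ m := (le_div_iff₀ hRmpos).mpr key
  refine key2.trans_eq ?_
  rw [hRm, hS, hAR2, Real.rpow_neg hm0.le, add_comm R ((m:ℝ)/2)]
  have hpow : (0:ℝ) < (m:ℝ) ^ ((m:ℝ)/2) := Real.rpow_pos_of_pos hm0 _
  field_simp
end

section
/- There do not exist permutations x, y of Fin 15 such that every orbit of x has size 3, every orbit of y has size 3, every orbit of (x*y)⁻¹ has size 3, the subgroup G of Equiv.Perm (Fin 15) generated by x and y acts transitively on Fin 15, and Fintype.card G = 15. Likewise, there do not exist permutations x, y of Fin 15 such that every orbit of x, of y, and of (x*y)⁻¹ has size 5, the generated subgroup acts transitively, and has cardinality 15. (The uniform passports [3^5, 3^5, 3^5] of genus 1 and [5^3, 5^3, 5^3] of genus 4 admit no regular dessin.) -/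
lemma pow_eq_one_of_allOrbitsSize {n a : ℕ} (ha : 0 < a) {σ : Equiv.Perm (Fin n)}
    (h : allOrbitsSize σ a) : σ ^ a = 1 := by
  ext e
  simp only [Equiv.Perm.coe_one, id_eq]
  have horb := h e
  have key : ∀ i j : Fin (a + 1), (i : ℕ) < (j : ℕ) →
      (σ ^ (i : ℕ)) e = (σ ^ (j : ℕ)) e → (σ ^ a) e = e := by
    intro i j hlt heq
    set m := (j : ℕ) - (i : ℕ) with hm
    have hm0 : 0 < m := by omega
    have hma : m ≤ a := by have := j.2; omega
    have hfix : (σ ^ m) e = e := by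
      have h1 : (σ ^ (i : ℕ)) ((σ ^ m) e) = (σ ^ (i : ℕ)) e := by
        rw [← Equiv.Perm.mul_apply, ← pow_add, show (i : ℕ) + m = (j : ℕ) by omega]
        exact heq.symm
      exact (Equiv.injective _) h1
    have hsub : permOrbit σ e ⊆ Set.range (fun r : Fin m => (σ ^ (r : ℕ)) e) := by
      rintro f ⟨k, rfl⟩
      have hmZ : (0 : ℤ) < (m : ℤ) := by exact_mod_cast hm0
      have hnn : 0 ≤ k % (m : ℤ) := Int.emod_nonneg k (by omega)
      have hltm : k % (m : ℤ) < (m : ℤ) := Int.emod_lt_of_pos k hmZ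
      refine ⟨⟨(k % (m : ℤ)).toNat, by omega⟩, ?_⟩
      show (σ ^ ((k % (m : ℤ)).toNat)) e = (σ ^ k) e
      have h1 : (σ ^ ((k % (m : ℤ)).toNat) : Equiv.Perm (Fin n)) = σ ^ (k % (m : ℤ)) := by
        rw [← zpow_natCast, Int.toNat_of_nonneg hnn]
      have hinner : (σ ^ ((m : ℤ) * (k / (m : ℤ)))) e = e := by
        rw [zpow_mul]
        exact Equiv.Perm.zpow_apply_eq_self_of_apply_eq_self
          (by rw [zpow_natCast]; exact hfix) _
      conv_rhs => rw [show k = k % (m : ℤ) + (m : ℤ) * (k / (m : ℤ)) from (Int.emod_add_mul_ediv k (m : ℤ)).symm]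
      rw [zpow_add, Equiv.Perm.mul_apply, hinner, h1]
    have hle : (permOrbit σ e).ncard ≤ m := by
      refine le_trans (Set.ncard_le_ncard hsub (Set.toFinite _)) ?_
      rw [← Set.image_univ]
      refine le_trans (Set.ncard_image_le (Set.toFinite _)) ?_
      rw [Set.ncard_univ]
      simp
    have hia : (i : ℕ) = 0 ∧ (j : ℕ) = a := by
      have := j.2
      omega
    calc (σ ^ a) e = (σ ^ (j : ℕ)) e := by rw [hia.2]
      _ = (σ ^ (i : ℕ)) e := heq.symm
      _ = e := by rw [hia.1, pow_zero]; rfl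
  have hninj : ¬ Function.Injective (fun k : Fin (a + 1) => (σ ^ (k : ℕ)) e) := by
    intro hinj
    have hsub : Set.range (fun k : Fin (a + 1) => (σ ^ (k : ℕ)) e) ⊆ permOrbit σ e := by
      rintro _ ⟨k, rfl⟩
      exact ⟨(k : ℕ), by rw [zpow_natCast]⟩
    have h1 : (Set.range fun k : Fin (a + 1) => (σ ^ (k : ℕ)) e).ncard = a + 1 := by
      rw [← Set.image_univ, Set.ncard_image_of_injective _ hinj, Set.ncard_univ]
      simp
    have h2 := Set.ncard_le_ncard hsub (Set.toFinite _)
    omega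
  rw [Function.not_injective_iff] at hninj
  obtain ⟨i, j, hij, hne⟩ := hninj
  rcases lt_or_gt_of_ne (fun hc : (i : ℕ) = (j : ℕ) => hne (Fin.ext hc)) with hlt | hlt
  · exact congrArg Fin.val (key i j hlt hij)
  · exact congrArg Fin.val (key j i hlt hij.symm)

lemma aux_sylow {x y : Equiv.Perm (Fin 15)} {p q : ℕ} [hp : Fact p.Prime] (hq : Nat.Prime q)
    (hpq : p * q = 15) (hqmod : ¬ q ≡ 1 [MOD p])
    (hfac : (15 : ℕ).factorization p = 1)
    (hx : x ^ p = 1) (hy : y ^ p = 1)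
    (hcard : Nat.card (Subgroup.closure ({x, y} : Set (Equiv.Perm (Fin 15)))) = 15) :
    False := by
  set H := Subgroup.closure ({x, y} : Set (Equiv.Perm (Fin 15))) with hH
  have hxH : x ∈ H := Subgroup.subset_closure (by simp)
  have hyH : y ∈ H := Subgroup.subset_closure (by simp)
  set x' : H := ⟨x, hxH⟩ with hx'def
  set y' : H := ⟨y, hyH⟩ with hy'def
  have hx' : x' ^ p = 1 := Subtype.ext (by simpa [hx'def] using hx)
  have hy' : y' ^ p = 1 := Subtype.ext (by simpa [hy'def] using hy)
  have hPG : ∀ z : H, z ^ p = 1 → IsPGroup p (Subgroup.zpowers z) := by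
    intro z hz g
    refine ⟨1, ?_⟩
    obtain ⟨k, hk⟩ := Subgroup.mem_zpowers_iff.mp g.2
    have h1 : (g : H) ^ p = 1 := by
      rw [← hk, ← zpow_natCast, ← zpow_mul, mul_comm, zpow_mul, zpow_natCast, hz, one_zpow]
    exact Subtype.ext (by simpa using h1)
  obtain ⟨Qx, hQx⟩ := (hPG x' hx').exists_le_sylow
  obtain ⟨Qy, hQy⟩ := (hPG y' hy').exists_le_sylow
  have hmod := card_sylow_modEq_one p H
  have hdvd := Sylow.card_dvd_index Qx
  have hcardQx : Nat.card Qx = p := by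
    rw [Sylow.card_eq_multiplicity Qx, hcard, hfac, pow_one]
  have hindex : (Qx : Subgroup H).index = q := by
    have h1 := Subgroup.card_mul_index (Qx : Subgroup H)
    rw [hcardQx, hcard] at h1
    exact Nat.eq_of_mul_eq_mul_left hp.out.pos (h1.trans hpq.symm)
  rw [hindex] at hdvd
  rcases hq.eq_one_or_self_of_dvd _ hdvd with hn | hn
  · have hsing : Subsingleton (Sylow p H) := by
      obtain ⟨_, h⟩ := Nat.card_eq_one_iff_unique.mp hn
      infer_instance
    have hQ : Qx = Qy := Subsingleton.elim _ _
    have hsub : H ≤ Subgroup.map H.subtype (Qx : Subgroup H) := by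
      refine (Subgroup.closure_le _).mpr ?_
      rintro z hz
      rcases hz with rfl | hz
      · exact ⟨x', hQx (Subgroup.mem_zpowers x'), rfl⟩
      · rcases hz with rfl
        exact ⟨y', hQ ▸ hQy (Subgroup.mem_zpowers y'), rfl⟩
    have hle : Nat.card H ≤ Nat.card (Subgroup.map H.subtype (Qx : Subgroup H)) :=
      Subgroup.card_le_of_le hsub
    have hcardmap : Nat.card (Subgroup.map H.subtype (Qx : Subgroup H))
        = Nat.card (Qx : Subgroup H) :=
      Nat.card_congr ((Qx : Subgroup H).equivMapOfInjective _ H.subtype_injective).symm.toEquiv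
    rw [hcard, hcardmap, hcardQx] at hle
    have := hq.two_le
    nlinarith
  · rw [hn] at hmod
    exact hqmod hmod

/-- The uniform passports `[3^5, 3^5, 3^5]` and `[5^3, 5^3, 5^3]` (with 15 edges)
admit no regular dessin. -/
theorem no_regular_dessin_deg15 :
    (¬ ∃ x y : Equiv.Perm (Fin 15),
      allOrbitsSize x 3 ∧ allOrbitsSize y 3 ∧ allOrbitsSize (x * y)⁻¹ 3 ∧
      (∀ e f : Fin 15,
        ∃ g ∈ Subgroup.closure ({x, y} : Set (Equiv.Perm (Fin 15))), g e = f) ∧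
      Nat.card (Subgroup.closure ({x, y} : Set (Equiv.Perm (Fin 15)))) = 15) ∧
    (¬ ∃ x y : Equiv.Perm (Fin 15),
      allOrbitsSize x 5 ∧ allOrbitsSize y 5 ∧ allOrbitsSize (x * y)⁻¹ 5 ∧
      (∀ e f : Fin 15,
        ∃ g ∈ Subgroup.closure ({x, y} : Set (Equiv.Perm (Fin 15))), g e = f) ∧
      Nat.card (Subgroup.closure ({x, y} : Set (Equiv.Perm (Fin 15)))) = 15) := by
  have hf3 : (15 : ℕ).factorization 3 = 1 := by
    rw [show (15 : ℕ) = 3 * 5 by norm_num, Nat.factorization_mul (by norm_num) (by norm_num)]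
    simp [Nat.Prime.factorization (by norm_num : Nat.Prime 3),
      Nat.Prime.factorization (by norm_num : Nat.Prime 5), Finsupp.single_apply]
  have hf5 : (15 : ℕ).factorization 5 = 1 := by
    rw [show (15 : ℕ) = 3 * 5 by norm_num, Nat.factorization_mul (by norm_num) (by norm_num)]
    simp [Nat.Prime.factorization (by norm_num : Nat.Prime 3),
      Nat.Prime.factorization (by norm_num : Nat.Prime 5), Finsupp.single_apply]
  constructor
  · rintro ⟨x, y, hx, hy, -, -, hcard⟩
    haveI : Fact (Nat.Prime 3) := ⟨by norm_num⟩
    exact aux_sylow (p := 3) (q := 5) (by norm_num) (by norm_num) (by decide) hf3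
      (pow_eq_one_of_allOrbitsSize (by norm_num) hx)
      (pow_eq_one_of_allOrbitsSize (by norm_num) hy) hcard
  · rintro ⟨x, y, hx, hy, -, -, hcard⟩
    haveI : Fact (Nat.Prime 5) := ⟨by norm_num⟩
    exact aux_sylow (p := 5) (q := 3) (by norm_num) (by norm_num) (by decide) hf5
      (pow_eq_one_of_allOrbitsSize (by norm_num) hx)
      (pow_eq_one_of_allOrbitsSize (by norm_num) hy) hcard
end
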